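/- arXiv:2207.08487 — 11 statements merged into one kernel-verified Lean document; each statement's English description precedes it below -/
import Mathlib

section
/- Let B be a small category and let M be the free monoid on the set of all morphisms of B (an element of M is a finite sequence of morphisms of B). Call a sequence in M reduced if it contains no identity morphism of B and no consecutive pair (f_i, f_{i+1}) of morphisms that are composable in B (i.e., the codomain of f_i equals the domain of f_{i+1}). Let S be the smallest monoid congruence on M such that (i) for every composable pair (u, v) in B, the two-element sequence (u, v) is congruent to the one-element sequence (v ∘ u), and (ii) for every object X of B, the one-element sequence (id_X) is congruent to the empty sequence. Then every element of M is S-congruent to exactly one reduced element. -/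
open CategoryTheory

universe u

/-- An arrow of `B` is an identity arrow if its domain and codomain coincide and it is
the identity (up to `eqToHom`). -/
def IsIdArrow {B : Type u} [Category.{u} B] (a : Arrow B) : Prop :=
  ∃ h : a.left = a.right, a.hom = eqToHom h

/-- A finite sequence of morphisms of `B` (an element of the free monoid on the set of
morphisms of `B`) is *reduced* if it contains no identity morphism and no consecutive
pair of composable morphisms. -/
def ReducedSeq {B : Type u} [Category.{u} B] (m : FreeMonoid (Arrow B)) : Prop :=
  (∀ a ∈ FreeMonoid.toList m, ¬ IsIdArrow a) ∧
    (FreeMonoid.toList m).Chain' fun a b => a.right ≠ b.left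

/-- The generating relation: a two-element sequence consisting of a composable pair is
related to the one-element sequence consisting of the composite, and the one-element
sequence consisting of an identity morphism is related to the empty sequence. -/
def GenRel (B : Type u) [Category.{u} B] :
    FreeMonoid (Arrow B) → FreeMonoid (Arrow B) → Prop := fun x y =>
  (∃ (a b : Arrow B) (h : a.right = b.left),
      x = FreeMonoid.of a * FreeMonoid.of b ∧
        y = FreeMonoid.of (Arrow.mk (a.hom ≫ eqToHom h ≫ b.hom))) ∨
  (∃ X : B, x = FreeMonoid.of (Arrow.mk (𝟙 X)) ∧ y = 1)

section Aux

variable {B : Type u} [Category.{u} B]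

/-- Composite of two composable arrows. -/
def mkc (a b : Arrow B) (h : a.right = b.left) : Arrow B :=
  Arrow.mk (a.hom ≫ eqToHom h ≫ b.hom)

@[simp] lemma mkc_left (a b : Arrow B) (h) : (mkc a b h).left = a.left := rfl
@[simp] lemma mkc_right (a b : Arrow B) (h) : (mkc a b h).right = b.right := rfl

lemma isIdArrow_mk_id (X : B) : IsIdArrow (Arrow.mk (𝟙 X)) :=
  ⟨rfl, by simp [IsIdArrow]⟩

lemma eq_mk_id_of_isId {a : Arrow B} (ha : IsIdArrow a) : ∃ X : B, a = Arrow.mk (𝟙 X) := by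
  obtain ⟨X, Y, f⟩ := a
  obtain ⟨h, he⟩ := ha
  change X = Y at h
  change f = eqToHom h at he
  subst h
  refine ⟨X, ?_⟩
  simp only [he, eqToHom_refl]
  rfl

lemma mkc_id_left {a b : Arrow B} (ha : IsIdArrow a) (h : a.right = b.left) :
    mkc a b h = b := by
  obtain ⟨X, Y, f⟩ := a
  obtain ⟨Z, W, g⟩ := b
  obtain ⟨h1, he⟩ := ha
  change Y = Z at h
  change X = Y at h1
  change f = eqToHom h1 at he
  subst h1; subst h; subst he
  simp [mkc]
  change Arrow.mk (𝟙 X ≫ g) = Arrow.mk g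
  rw [Category.id_comp]

lemma mkc_id_right {a b : Arrow B} (hb : IsIdArrow b) (h : a.right = b.left) :
    mkc a b h = a := by
  obtain ⟨X, Y, f⟩ := a
  obtain ⟨Z, W, g⟩ := b
  obtain ⟨h1, he⟩ := hb
  change Y = Z at h
  change Z = W at h1
  change g = eqToHom h1 at he
  subst h1; subst h; subst he
  simp [mkc]
  change Arrow.mk (f ≫ 𝟙 Y) = Arrow.mk f
  exact congrArg Arrow.mk (Category.comp_id (f : X ⟶ Y))

lemma mkc_assoc {a b c : Arrow B} (h1 : a.right = b.left) (h2 : b.right = c.left) :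
    mkc (mkc a b h1) c h2 = mkc a (mkc b c h2) h1 := by
  obtain ⟨X, Y, f⟩ := a
  obtain ⟨Z, W, g⟩ := b
  obtain ⟨V, U, e⟩ := c
  change Y = Z at h1
  change W = V at h2
  subst h1; subst h2
  simp [mkc]

open Classical in
/-- Insert an arrow at the front of a (reduced) list, performing reductions. -/
noncomputable def ins : Arrow B → List (Arrow B) → List (Arrow B)
  | a, [] => if IsIdArrow a then [] else [a]
  | a, b :: l =>
    if IsIdArrow a then b :: l
    else if h : a.right = b.left then ins (mkc a b h) l
    else a :: b :: l

/-- Reducedness for plain lists. -/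
def RList (l : List (Arrow B)) : Prop :=
  (∀ a ∈ l, ¬ IsIdArrow a) ∧ l.Chain' fun a b => a.right ≠ b.left

open Classical in
lemma ins_nil (a : Arrow B) : ins a [] = if IsIdArrow a then [] else [a] := by
  rw [ins]

open Classical in
lemma ins_cons (a b : Arrow B) (l : List (Arrow B)) :
    ins a (b :: l) =
      if IsIdArrow a then b :: l
      else if h : a.right = b.left then ins (mkc a b h) l
      else a :: b :: l := by
  rw [ins]

lemma ins_id {a : Arrow B} (ha : IsIdArrow a) (l : List (Arrow B)) : ins a l = l := by
  cases l <;> simp [ins_nil, ins_cons, ha]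

lemma ins_nil_of_not {a : Arrow B} (ha : ¬ IsIdArrow a) : ins a [] = [a] := by
  simp [ins_nil, ha]

lemma ins_cons_comp {a b : Arrow B} (ha : ¬ IsIdArrow a) (h : a.right = b.left)
    (l : List (Arrow B)) : ins a (b :: l) = ins (mkc a b h) l := by
  simp [ins_cons, ha, h]

lemma ins_cons_not {a b : Arrow B} (ha : ¬ IsIdArrow a) (h : a.right ≠ b.left)
    (l : List (Arrow B)) : ins a (b :: l) = a :: b :: l := by
  simp [ins_cons, ha, h]

lemma rlist_nil : RList ([] : List (Arrow B)) := ⟨by simp, List.isChain_nil⟩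

lemma rlist_tail {a : Arrow B} {l : List (Arrow B)} (h : RList (a :: l)) : RList l :=
  ⟨fun x hx => h.1 x (List.mem_cons_of_mem _ hx), h.2.tail⟩

lemma ins_of_rlist {a : Arrow B} {l : List (Arrow B)} (h : RList (a :: l)) :
    ins a l = a :: l := by
  have ha := h.1 a (List.mem_cons_self)
  cases l with
  | nil => exact ins_nil_of_not ha
  | cons b l' =>
    exact ins_cons_not ha (List.isChain_cons_cons.1 h.2).1 _

lemma rlist_ins (a : Arrow B) {l : List (Arrow B)} (hl : RList l) : RList (ins a l) := by
  induction l generalizing a with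
  | nil =>
    by_cases ha : IsIdArrow a
    · rw [ins_id ha]; exact rlist_nil
    · rw [ins_nil_of_not ha]
      exact ⟨by simpa using ha, List.isChain_singleton _⟩
  | cons b l' ih =>
    by_cases ha : IsIdArrow a
    · rw [ins_id ha]; exact hl
    · by_cases h : a.right = b.left
      · rw [ins_cons_comp ha h]
        exact ih _ (rlist_tail hl)
      · rw [ins_cons_not ha h]
        refine ⟨?_, List.isChain_cons_cons.2 ⟨h, hl.2⟩⟩
        intro x hx
        rcases List.mem_cons.1 hx with rfl | hx
        · exact ha
        · exact hl.1 x hx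

lemma ins_ins {l : List (Arrow B)} (hl : RList l) :
    ∀ (a b : Arrow B) (h : a.right = b.left), ins a (ins b l) = ins (mkc a b h) l := by
  induction l with
  | nil =>
    intro a b h
    by_cases hb : IsIdArrow b
    · rw [ins_id hb, mkc_id_right hb]
    · rw [ins_nil_of_not hb]
      by_cases ha : IsIdArrow a
      · rw [ins_id ha, mkc_id_left ha, ins_nil_of_not hb]
      · rw [ins_cons_comp ha h]
  | cons c l' ih =>
    intro a b h
    by_cases hb : IsIdArrow b
    · rw [ins_id hb, mkc_id_right hb]
    · by_cases ha : IsIdArrow a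
      · rw [ins_id ha, mkc_id_left ha]
      · by_cases hbc : b.right = c.left
        · rw [ins_cons_comp hb hbc]
          rw [ih (rlist_tail hl) a (mkc b c hbc) h, ← mkc_assoc h hbc]
          by_cases hab : IsIdArrow (mkc a b h)
          · rw [ins_id hab, show mkc (mkc a b h) c hbc = c from mkc_id_left hab hbc, ins_of_rlist hl]
          · rw [ins_cons_comp hab hbc]
        · rw [ins_cons_not hb hbc, ins_cons_comp ha h]

lemma foldr_ins {L : List (Arrow B)} (hL : RList L) :
    ∀ (N : List (Arrow B)) (a : Arrow B),
      List.foldr ins L (ins a N) = ins a (List.foldr ins L N) := by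
  intro N
  induction N generalizing L with
  | nil =>
    intro a
    by_cases ha : IsIdArrow a
    · rw [ins_id ha]
      simp [ins_id ha]
    · rw [ins_nil_of_not ha]
      simp
  | cons b N' ih =>
    intro a
    have hred : RList (List.foldr ins L N') := by
      clear ih
      induction N' with
      | nil => exact hL
      | cons x xs ihx => exact rlist_ins _ ihx
    by_cases ha : IsIdArrow a
    · rw [ins_id ha, ins_id ha]
    · by_cases h : a.right = b.left
      · rw [ins_cons_comp ha h, ih hL]
        simp only [List.foldr_cons]
        rw [ins_ins hred a b h]
      · rw [ins_cons_not ha h]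
        simp

lemma foldr_norm {L : List (Arrow B)} (hL : RList L) (x : List (Arrow B)) :
    List.foldr ins L (List.foldr ins [] x) = List.foldr ins L x := by
  induction x with
  | nil => simp
  | cons a x' ih =>
    simp only [List.foldr_cons]
    rw [foldr_ins hL, ih]

lemma rlist_norm (x : List (Arrow B)) : RList (List.foldr ins [] x) := by
  induction x with
  | nil => exact rlist_nil
  | cons a x' ih => exact rlist_ins _ ih

lemma norm_of_rlist {l : List (Arrow B)} (hl : RList l) : List.foldr ins [] l = l := by
  induction l with
  | nil => rfl
  | cons a l' ih =>
    simp only [List.foldr_cons]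
    rw [ih (rlist_tail hl), ins_of_rlist hl]

/-- The congruence of having equal normal forms. -/
noncomputable def normCon : Con (FreeMonoid (Arrow B)) where
  r x y := List.foldr ins [] (FreeMonoid.toList x) = List.foldr ins [] (FreeMonoid.toList y)
  iseqv := ⟨fun _ => rfl, Eq.symm, Eq.trans⟩
  mul' := by
    intro w x y z h1 h2
    show List.foldr ins [] (FreeMonoid.toList (w * y)) =
      List.foldr ins [] (FreeMonoid.toList (x * z))
    rw [FreeMonoid.toList_mul, FreeMonoid.toList_mul, List.foldr_append, List.foldr_append,
      ← foldr_norm (rlist_norm _) (FreeMonoid.toList w),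
      ← foldr_norm (rlist_norm _) (FreeMonoid.toList x), h1, h2]

lemma genRel_le_normCon : ∀ x y, GenRel B x y → normCon x y := by
  intro x y hxy
  rcases hxy with ⟨a, b, h, rfl, rfl⟩ | ⟨X, rfl, rfl⟩
  · show List.foldr ins [] _ = List.foldr ins [] _
    rw [FreeMonoid.toList_mul]
    simp only [FreeMonoid.toList_of, List.singleton_append, List.foldr_cons, List.foldr_nil]
    rw [ins_ins rlist_nil a b h]
    rfl
  · show List.foldr ins [] _ = List.foldr ins [] _
    simp only [FreeMonoid.toList_of, FreeMonoid.toList_one, List.foldr_cons, List.foldr_nil]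
    rw [ins_id (isIdArrow_mk_id X)]

lemma conGen_ins (l : List (Arrow B)) :
    ∀ a : Arrow B,
      conGen (GenRel B) (FreeMonoid.ofList (a :: l)) (FreeMonoid.ofList (ins a l)) := by
  induction l with
  | nil =>
    intro a
    by_cases ha : IsIdArrow a
    · rw [ins_id ha]
      obtain ⟨X, rfl⟩ := eq_mk_id_of_isId ha
      exact ConGen.Rel.of _ _ (Or.inr ⟨X, rfl, rfl⟩)
    · rw [ins_nil_of_not ha]
      exact ConGen.Rel.refl _
  | cons b l' ih =>
    intro a
    by_cases ha : IsIdArrow a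
    · rw [ins_id ha]
      obtain ⟨X, rfl⟩ := eq_mk_id_of_isId ha
      have : FreeMonoid.ofList (Arrow.mk (𝟙 X) :: b :: l') =
          FreeMonoid.of (Arrow.mk (𝟙 X)) * FreeMonoid.ofList (b :: l') := rfl
      rw [this]
      have h1 : conGen (GenRel B) (FreeMonoid.of (Arrow.mk (𝟙 X))) 1 :=
        ConGen.Rel.of _ _ (Or.inr ⟨X, rfl, rfl⟩)
      have := ConGen.Rel.mul h1 (ConGen.Rel.refl (FreeMonoid.ofList (b :: l')))
      rwa [one_mul] at this
    · by_cases h : a.right = b.left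
      · rw [ins_cons_comp ha h]
        have e1 : FreeMonoid.ofList (a :: b :: l') =
            (FreeMonoid.of a * FreeMonoid.of b) * FreeMonoid.ofList l' := rfl
        have e2 : FreeMonoid.ofList (mkc a b h :: l') =
            FreeMonoid.of (mkc a b h) * FreeMonoid.ofList l' := rfl
        have h1 : conGen (GenRel B) (FreeMonoid.of a * FreeMonoid.of b)
            (FreeMonoid.of (mkc a b h)) :=
          ConGen.Rel.of _ _ (Or.inl ⟨a, b, h, rfl, rfl⟩)
        have h2 := ConGen.Rel.mul h1 (ConGen.Rel.refl (FreeMonoid.ofList l'))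
        rw [e1]
        exact ConGen.Rel.trans (by rw [← e2] at h2; exact h2) (ih (mkc a b h))
      · rw [ins_cons_not ha h]
        exact ConGen.Rel.refl _

lemma conGen_norm (m : FreeMonoid (Arrow B)) :
    conGen (GenRel B) m (FreeMonoid.ofList (List.foldr ins [] (FreeMonoid.toList m))) := by
  have : ∀ l : List (Arrow B),
      conGen (GenRel B) (FreeMonoid.ofList l) (FreeMonoid.ofList (List.foldr ins [] l)) := by
    intro l
    induction l with
    | nil => exact ConGen.Rel.refl _
    | cons a l' ih =>
      have e1 : FreeMonoid.ofList (a :: l') = FreeMonoid.of a * FreeMonoid.ofList l' := rfl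
      have e2 : FreeMonoid.ofList (a :: List.foldr ins [] l') =
          FreeMonoid.of a * FreeMonoid.ofList (List.foldr ins [] l') := rfl
      have h1 := ConGen.Rel.mul (ConGen.Rel.refl (FreeMonoid.of a)) ih
      rw [e1]
      refine ConGen.Rel.trans (by rw [← e2] at h1; exact h1) ?_
      exact conGen_ins (List.foldr ins [] l') a
  have h := this (FreeMonoid.toList m)
  rwa [FreeMonoid.ofList_toList] at h

end Aux

/-- **Isbell–Börger.** Every element of the free monoid on the morphisms of a small
category `B` is congruent, modulo the smallest congruence identifying composable pairs
with their composite and identities with the empty sequence, to exactly one reduced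
element. -/
theorem exists_unique_reduced_rep {B : Type u} [Category.{u} B]
    (m : FreeMonoid (Arrow B)) :
    ∃! r : FreeMonoid (Arrow B), ReducedSeq r ∧ conGen (GenRel B) m r := by
  refine ⟨FreeMonoid.ofList (List.foldr ins [] (FreeMonoid.toList m)), ⟨?_, conGen_norm m⟩, ?_⟩
  · have := rlist_norm (FreeMonoid.toList m)
    constructor
    · simpa [FreeMonoid.toList_ofList] using this.1
    · simpa [FreeMonoid.toList_ofList] using this.2
  · rintro r ⟨hred, hrel⟩
    have hle : conGen (GenRel B) ≤ normCon := Con.conGen_le.2 genRel_le_normCon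
    have h1 : normCon m r := hle hrel
    have h2 : List.foldr ins [] (FreeMonoid.toList m) = List.foldr ins [] (FreeMonoid.toList r) :=
      h1
    have h3 : List.foldr ins [] (FreeMonoid.toList r) = FreeMonoid.toList r :=
      norm_of_rlist ⟨hred.1, hred.2⟩
    rw [h2, h3, FreeMonoid.ofList_toList]
end

section
/- Let A be a discrete small category (a category with no non-identity morphisms), let F, G : A ⥤ B be two functors into a small category B, and let Q : B ⥤ Q be the coequalizer of F and G in the category Cat of small categories. Then the functor Q is faithful. -/
open CategoryTheory Limits

universe u

namespace FaithfulCoeqAux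

variable {B : Type u} [Category.{u} B]

/-- An edge: a morphism of `B` with explicit source and target. -/
abbrev E (B : Type u) [Category.{u} B] : Type u := Σ x y : B, x ⟶ y

/-- An edge is an identity-like morphism. -/
def IsId (e : E B) : Prop := ∃ h : e.1 = e.2.1, e.2.2 = eqToHom h

/-- Words: lists of edges, most recent edge first. -/
inductive W (B : Type u) [Category.{u} B] : Type u
  | nil : W B
  | cons : E B → W B → W B

/-- A word is reduced: every edge is a non-identity, and adjacent edges are not
composable in `B`. -/
def Red : W B → Prop
  | .nil => True
  | .cons e w => ¬ IsId e ∧ Red w ∧ (∀ e' w', w = .cons e' w' → e'.2.1 ≠ e.1)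

open Classical in
/-- The action of a morphism `f : x ⟶ y` on words. -/
noncomputable def act0 {x y : B} (f : x ⟶ y) : W B → W B
  | .nil => if IsId ⟨x, y, f⟩ then .nil else .cons ⟨x, y, f⟩ .nil
  | .cons e w =>
      if h : e.2.1 = x then
        if IsId ⟨e.1, y, e.2.2 ≫ eqToHom h ≫ f⟩ then w
        else .cons ⟨e.1, y, e.2.2 ≫ eqToHom h ≫ f⟩ w
      else if IsId ⟨x, y, f⟩ then .cons e w
      else .cons ⟨x, y, f⟩ (.cons e w)

open Classical in
theorem act0_nil {x y : B} (f : x ⟶ y) :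
    act0 f (W.nil : W B) = if IsId ⟨x, y, f⟩ then W.nil else W.cons ⟨x, y, f⟩ W.nil := by
  rw [act0]

open Classical in
theorem act0_cons_eq {a x y : B} (ee : a ⟶ x) (w : W B) (f : x ⟶ y) :
    act0 f (W.cons ⟨a, x, ee⟩ w) =
      if IsId ⟨a, y, ee ≫ f⟩ then w else W.cons ⟨a, y, ee ≫ f⟩ w := by
  rw [act0]
  rw [dif_pos (show (⟨a, ⟨x, ee⟩⟩ : E B).2.1 = x from rfl)]
  simp

open Classical in
theorem act0_cons_ne {a t x y : B} (ee : a ⟶ t) (w : W B) (f : x ⟶ y) (h : t ≠ x) :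
    act0 f (W.cons ⟨a, t, ee⟩ w) =
      if IsId ⟨x, y, f⟩ then W.cons ⟨a, t, ee⟩ w
      else W.cons ⟨x, y, f⟩ (W.cons ⟨a, t, ee⟩ w) := by
  rw [act0]
  rw [dif_neg (show ¬ (⟨a, ⟨t, ee⟩⟩ : E B).2.1 = x from h)]

theorem red_act0 {x y : B} (f : x ⟶ y) (w : W B) (hw : Red w) : Red (act0 f w) := by
  classical
  cases w with
  | nil =>
      rw [act0_nil]
      split
      · trivial
      · exact ⟨by assumption, trivial, by intro e' w' h; cases h⟩
  | cons e w =>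
      obtain ⟨a, t, ee⟩ := e
      obtain ⟨he, hw, hadj⟩ := hw
      by_cases h1 : t = x
      · subst h1
        rw [act0_cons_eq]
        split
        · exact hw
        · exact ⟨by assumption, hw, hadj⟩
      · rw [act0_cons_ne ee w f h1]
        split
        · exact ⟨he, hw, hadj⟩
        · refine ⟨by assumption, ⟨he, hw, hadj⟩, ?_⟩
          intro e' w' h
          cases h
          exact h1

theorem act0_id {x y : B} (f : x ⟶ y) (hf : IsId ⟨x, y, f⟩) (w : W B) (hw : Red w) :
    act0 f w = w := by
  classical
  obtain ⟨h, hf⟩ := hf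
  dsimp only at h hf
  cases h
  subst hf
  cases w with
  | nil => rw [act0_nil, if_pos ⟨rfl, rfl⟩]
  | cons e w =>
      obtain ⟨a, t, ee⟩ := e
      obtain ⟨he, hw, hadj⟩ := hw
      by_cases h1 : t = x
      · subst h1
        rw [act0_cons_eq]
        have h2 : (⟨a, t, ee ≫ eqToHom rfl⟩ : E B) = ⟨a, t, ee⟩ := by simp
        rw [show ee ≫ eqToHom rfl = ee from by simp]
        rw [if_neg he]
      · rw [act0_cons_ne ee w _ h1, if_pos ⟨rfl, rfl⟩]

theorem act0_comp {x y z : B} (f : x ⟶ y) (g : y ⟶ z) (w : W B) (hw : Red w) :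
    act0 g (act0 f w) = act0 (f ≫ g) w := by
  classical
  by_cases hf : IsId ⟨x, y, f⟩
  · obtain ⟨h, hf⟩ := hf
    dsimp only at h hf
    cases h
    subst hf
    rw [act0_id (eqToHom rfl) ⟨rfl, rfl⟩ w hw]
    simp only [eqToHom_refl, Category.id_comp]
  by_cases hg : IsId ⟨y, z, g⟩
  · obtain ⟨h, hg⟩ := hg
    dsimp only at h hg
    cases h
    subst hg
    rw [act0_id (eqToHom rfl) ⟨rfl, rfl⟩ _ (red_act0 f w hw)]
    simp only [eqToHom_refl, Category.comp_id]
  cases w with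
  | nil =>
      rw [act0_nil f, if_neg hf, act0_cons_eq f W.nil g, act0_nil (f ≫ g)]
  | cons e w' =>
      obtain ⟨a, t, ee⟩ := e
      obtain ⟨he, hw', hadj⟩ := hw
      by_cases h1 : t = x
      · subst h1
        rw [act0_cons_eq ee w' f]
        by_cases hc1 : IsId ⟨a, y, ee ≫ f⟩
        · rw [if_pos hc1, act0_cons_eq ee w' (f ≫ g)]
          obtain ⟨h, hc⟩ := hc1
          dsimp only at h hc
          cases h
          have h2 : ¬ IsId ⟨y, z, ee ≫ f ≫ g⟩ := by
            rintro ⟨hh, hcc⟩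
            dsimp only at hh hcc
            cases hh
            apply hg
            refine ⟨rfl, ?_⟩
            dsimp only
            calc g = (ee ≫ f) ≫ g := by rw [hc]; simp
            _ = eqToHom rfl := by rw [Category.assoc, hcc]
          rw [if_neg h2]
          have h3 : ee ≫ f ≫ g = g := by rw [← Category.assoc, hc]; simp
          rw [h3]
          cases w' with
          | nil => rw [act0_nil g, if_neg hg]
          | cons e2 w'' =>
              obtain ⟨b, t2, e2'⟩ := e2
              have hne : t2 ≠ y := hadj ⟨b, t2, e2'⟩ w'' rfl
              rw [act0_cons_ne e2' w'' g hne, if_neg hg]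
        · rw [if_neg hc1, act0_cons_eq (ee ≫ f) w' g, act0_cons_eq ee w' (f ≫ g),
            Category.assoc]
      · rw [act0_cons_ne ee w' f h1, if_neg hf, act0_cons_eq f _ g,
          act0_cons_ne ee w' (f ≫ g) h1]

theorem act0_inj {x y : B} (f g : x ⟶ y) (h : act0 f (W.nil : W B) = act0 g W.nil) :
    f = g := by
  classical
  by_cases hf : IsId ⟨x, y, f⟩ <;> by_cases hg : IsId ⟨x, y, g⟩
  · obtain ⟨h1, e1⟩ := hf
    obtain ⟨h2, e2⟩ := hg
    dsimp only at h1 e1 h2 e2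
    rw [e1, e2]
  · rw [act0_nil, act0_nil, if_pos hf, if_neg hg] at h
    exact absurd h (by intro hh; cases hh)
  · rw [act0_nil, act0_nil, if_neg hf, if_pos hg] at h
    exact absurd h (by intro hh; cases hh)
  · rw [act0_nil, act0_nil, if_neg hf, if_neg hg] at h
    injection h with h1 _
    injection h1 with _ h2
    injection h2

/-- Reduced words. -/
def S (B : Type u) [Category.{u} B] : Type u := {w : W B // Red w}

/-- The action on reduced words. -/
noncomputable def act {x y : B} (f : x ⟶ y) : S B → S B :=
  fun w => ⟨act0 f w.1, red_act0 f w.1 w.2⟩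

/-- The one-object target category. -/
def C (B : Type u) [Category.{u} B] : Type u := PUnit.{u + 1}

instance : Category.{u} (C B) where
  Hom _ _ := S B → S B
  id _ := id
  comp f g := g ∘ f

/-- The faithful functor from `B` to the one-object category. -/
noncomputable def H (B : Type u) [Category.{u} B] : B ⥤ C B where
  obj _ := ⟨⟩
  map f := act f
  map_id x := by
    funext w
    exact Subtype.ext (act0_id (𝟙 x) ⟨rfl, (eqToHom_refl x rfl).symm⟩ w.1 w.2)
  map_comp f g := by
    funext w
    exact Subtype.ext (act0_comp f g w.1 w.2).symm

instance : (H B).Faithful := by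
  constructor
  intro X Y f g hfg
  apply act0_inj f g
  have h2 := congrFun hfg (⟨W.nil, trivial⟩ : S B)
  exact congrArg Subtype.val h2

end FaithfulCoeqAux

/-- The coequalizer, in the category `Cat` of small categories, of two functors defined
on a discrete category is faithful. -/
theorem faithful_coequalizer_of_discrete
    (A B : Cat.{u, u})
    (hA : ∀ (X Y : A) (f : X ⟶ Y), ∃ h : X = Y, f = eqToHom h)
    (F G : A ⟶ B) (c : Cofork F G) (hc : IsColimit c) :
    (c.π.toFunctor : (B : Type u) ⥤ (c.pt : Type u)).Faithful := by
  classical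
  let Ccat : Cat.{u, u} := Cat.of (FaithfulCoeqAux.C ↥B)
  let H : B ⟶ Ccat := (FaithfulCoeqAux.H ↥B).toCatHom
  have hw : F ≫ H = G ≫ H := by
    apply Cat.ext; apply CategoryTheory.Functor.ext
    · intro a a' φ
      obtain ⟨h, rfl⟩ := hA a a' φ
      cases h
      simp
    · intro a
      rfl
  let cc : Cofork F G := Cofork.ofπ H hw
  let K := hc.desc cc
  have hK : c.π ≫ K = H := by
    exact hc.fac cc WalkingParallelPair.one
  constructor
  intro X Y f g hfg
  have h1 : H.toFunctor.map f = H.toFunctor.map g := by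
    rw [← hK]
    show K.toFunctor.map (c.π.toFunctor.map f) = K.toFunctor.map (c.π.toFunctor.map g)
    rw [hfg]
  exact (FaithfulCoeqAux.H ↥B).map_injective h1
end

section
/- Let A be a discrete small category, let F, G : A ⥤ B be two functors into a small category B, and let Q : B ⥤ Q be the coequalizer of F and G in Cat. If f : X ⟶ Y and g : X' ⟶ Y' are two non-identity morphisms of B such that Q(X) = Q(X'), Q(Y) = Q(Y'), and Q(f) and Q(g) are equal as morphisms of Q (after transporting along these equalities of objects), then X = X', Y = Y', and f = g. -/
open CategoryTheory Limits

universe u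

namespace CoeqAux
variable {B : Type u} [Category.{u} B]
structure Letter (B : Type u) [Category.{u} B] : Type u where
  X : B
  Y : B
  φ : X ⟶ Y
  ne : ¬ ∃ h : X = Y, φ = eqToHom h
attribute [local instance] Classical.propDecidable
lemma Letter.ext' {a b : Letter B} (hX : a.X = b.X) (hY : a.Y = b.Y)
    (hφ : a.φ = eqToHom hX ≫ b.φ ≫ eqToHom hY.symm) : a = b := by
  obtain ⟨x, y, φ, hφ'⟩ := a
  obtain ⟨x', y', ψ, hψ'⟩ := b
  dsimp at hX hY hφ
  subst hX; subst hY
  simp only [eqToHom_refl, Category.id_comp, Category.comp_id] at hφ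
  subst hφ
  rfl
def Reduced (l : List (Letter B)) : Prop := l.IsChain (fun a b => a.Y ≠ b.X)
lemma Reduced.nil : Reduced ([] : List (Letter B)) := List.isChain_nil
lemma Reduced.tail {l : List (Letter B)} (h : Reduced l) : Reduced l.tail := List.IsChain.tail h
lemma Reduced.singleton (a : Letter B) : Reduced [a] := List.isChain_singleton a
noncomputable def ins (a : Letter B) : List (Letter B) → List (Letter B)
  | [] => [a]
  | b :: rest =>
    if hc : a.Y = b.X then
      if hid : ∃ h : a.X = b.Y, (a.φ ≫ eqToHom hc ≫ b.φ) = eqToHom h then rest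
      else ⟨a.X, b.Y, a.φ ≫ eqToHom hc ≫ b.φ, hid⟩ :: rest
    else a :: b :: rest

lemma ins_cons (a b : Letter B) (rest : List (Letter B)) :
    ins a (b :: rest) =
      if hc : a.Y = b.X then
        if hid : ∃ h : a.X = b.Y, (a.φ ≫ eqToHom hc ≫ b.φ) = eqToHom h then rest
        else ⟨a.X, b.Y, a.φ ≫ eqToHom hc ≫ b.φ, hid⟩ :: rest
      else a :: b :: rest := rfl

lemma ins_reduced (a : Letter B) {l : List (Letter B)} (hl : Reduced l) :
    Reduced (ins a l) := by
  cases l with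
  | nil => exact List.isChain_singleton a
  | cons b rest =>
    rw [ins]
    split
    · split
      · exact hl.tail
      · rw [Reduced, List.isChain_cons]
        rw [Reduced, List.isChain_cons] at hl
        exact ⟨fun y hy => hl.1 y hy, hl.2⟩
    · rw [Reduced, List.isChain_cons_cons]
      exact ⟨‹_›, hl⟩
lemma ins_of_reduced_cons {a : Letter B} {l : List (Letter B)}
    (h : Reduced (a :: l)) : ins a l = a :: l := by
  cases l with
  | nil => rfl
  | cons b rest =>
    rw [Reduced, List.isChain_cons_cons] at h
    rw [ins, dif_neg h.1]
noncomputable def mulL (u v : List (Letter B)) : List (Letter B) := u.foldr ins v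
lemma mulL_nil_left (v : List (Letter B)) : mulL [] v = v := rfl
lemma mulL_cons (a : Letter B) (u v : List (Letter B)) :
    mulL (a :: u) v = ins a (mulL u v) := rfl
lemma mulL_reduced (u : List (Letter B)) {v : List (Letter B)} (hv : Reduced v) :
    Reduced (mulL u v) := by
  induction u with
  | nil => exact hv
  | cons a t ih => exact ins_reduced a ih
lemma mulL_nil_right {u : List (Letter B)} (hu : Reduced u) : mulL u [] = u := by
  induction u with
  | nil => rfl
  | cons a t ih =>
    rw [mulL_cons, ih hu.tail]
    exact ins_of_reduced_cons hu

-- Sub-lemma A : inserting two letters whose composite is an identity is a no-op.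
lemma ins_ins_of_id {a b : Letter B} (hc : a.Y = b.X)
    (hid : ∃ h : a.X = b.Y, (a.φ ≫ eqToHom hc ≫ b.φ) = eqToHom h)
    {l : List (Letter B)} (hl : Reduced l) :
    ins a (ins b l) = l := by
  cases l with
  | nil =>
    show ins a [b] = []
    rw [ins_cons, dif_pos hc, dif_pos hid]
  | cons d rest =>
    rw [ins_cons (a := b)]
    split
    · rename_i hbd
      split
      · -- composite b∘d is an identity: show ins a rest = d :: rest
        rename_i hide
        -- first : a = d as letters
        obtain ⟨x, y, φ, hφ'⟩ := a
        obtain ⟨x', y', ψ, hψ'⟩ := b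
        obtain ⟨x'', y'', δ, hδ'⟩ := d
        dsimp at hc hbd hid hide ⊢
        subst hc; subst hbd
        obtain ⟨h1, e1⟩ := hid
        obtain ⟨h2, e2⟩ := hide
        subst h1; subst h2
        simp only [eqToHom_refl, Category.id_comp, Category.comp_id] at e1 e2
        have had : φ = δ := by
          have h3 : φ ≫ ψ ≫ δ = δ := by rw [← Category.assoc, e1, Category.id_comp]
          rw [← h3, e2, Category.comp_id]
        subst had
        have hred : Reduced (Letter.mk x y φ hφ' :: rest) := by
          rw [Reduced, List.isChain_cons] at hl ⊢
          exact hl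
        exact ins_of_reduced_cons hred
      · -- composite e = b∘d is not an identity: ins a (e :: rest) = d :: rest
        rename_i hide
        rw [ins_cons, dif_pos hc]
        -- composite a ∘ e where e = ⟨b.X? ...⟩
        obtain ⟨x, y, φ, hφ'⟩ := a
        obtain ⟨x', y', ψ, hψ'⟩ := b
        obtain ⟨x'', y'', δ, hδ'⟩ := d
        dsimp at hc hbd hid hide ⊢
        subst hc; subst hbd
        obtain ⟨h1, e1⟩ := hid
        subst h1
        simp only [eqToHom_refl, Category.id_comp, Category.comp_id] at e1 ⊢
        -- composite : φ ≫ (ψ ≫ δ) ; and φ ≫ ψ = 𝟙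
        have key : φ ≫ ψ ≫ δ = δ := by rw [← Category.assoc, e1, Category.id_comp]
        rw [dif_neg (by
          rintro ⟨h, e⟩
          exact hδ' ⟨h, by rw [← key, e]⟩)]
        congr 1
        exact Letter.ext' rfl rfl (by simp [key])
    · -- b, d not composable
      rw [ins_cons, dif_pos hc, dif_pos hid]
end CoeqAux
namespace CoeqAux
variable {B : Type u} [Category.{u} B]
attribute [local instance] Classical.propDecidable

lemma ins_cons_id {x y z w : B} (φ : x ⟶ y) (hφ) (ψ : z ⟶ w) (hψ)
    (rest : List (Letter B)) (hc : y = z)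
    (hid : ∃ h : x = w, φ ≫ eqToHom hc ≫ ψ = eqToHom h) :
    ins ⟨x, y, φ, hφ⟩ (⟨z, w, ψ, hψ⟩ :: rest) = rest := by
  rw [ins_cons]; exact dif_pos hc ▸ dif_pos hid ▸ rfl

lemma ins_cons_ne {x y z w : B} (φ : x ⟶ y) (hφ) (ψ : z ⟶ w) (hψ)
    (rest : List (Letter B)) (hc : y = z)
    (hid : ¬ ∃ h : x = w, φ ≫ eqToHom hc ≫ ψ = eqToHom h) :
    ins ⟨x, y, φ, hφ⟩ (⟨z, w, ψ, hψ⟩ :: rest) =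
      ⟨x, w, φ ≫ eqToHom hc ≫ ψ, hid⟩ :: rest := by
  rw [ins_cons]; exact dif_pos hc ▸ dif_neg hid ▸ rfl

lemma ins_cons_nc {x y z w : B} (φ : x ⟶ y) (hφ) (ψ : z ⟶ w) (hψ)
    (rest : List (Letter B)) (hc : ¬ y = z) :
    ins ⟨x, y, φ, hφ⟩ (⟨z, w, ψ, hψ⟩ :: rest) =
      ⟨x, y, φ, hφ⟩ :: ⟨z, w, ψ, hψ⟩ :: rest := by
  rw [ins_cons]; exact dif_neg hc ▸ rfl
end CoeqAux
namespace CoeqAux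
variable {B : Type u} [Category.{u} B]
attribute [local instance] Classical.propDecidable

-- Sub-lemma B : inserting a (non-identity) composite = inserting the two factors.
lemma ins_comp (a b : Letter B) (hc : a.Y = b.X)
    (hnid : ¬ ∃ h : a.X = b.Y, (a.φ ≫ eqToHom hc ≫ b.φ) = eqToHom h)
    {l : List (Letter B)} (hl : Reduced l) :
    ins ⟨a.X, b.Y, a.φ ≫ eqToHom hc ≫ b.φ, hnid⟩ l = ins a (ins b l) := by
  obtain ⟨x, y, φ, hφ'⟩ := a
  obtain ⟨y', z, ψ, hψ'⟩ := b
  dsimp at hc hnid ⊢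
  subst hc
  cases l with
  | nil =>
    show _ = ins _ [_]
    rw [ins_cons_ne φ hφ' ψ hψ' [] rfl hnid]
    rfl
  | cons d rest =>
    obtain ⟨z', w, δ, hδ'⟩ := d
    by_cases hbd : z = z'
    · subst hbd
      by_cases hide : ∃ h : y = w, ψ ≫ eqToHom (rfl : z = z) ≫ δ = eqToHom h
      · -- composite ψ∘δ is an identity
        rw [ins_cons_id ψ hψ' δ hδ' rest rfl hide]
        obtain ⟨h2, e2⟩ := hide
        subst h2
        simp only [eqToHom_refl, Category.id_comp] at e2
        have key : (φ ≫ eqToHom (rfl : y = y) ≫ ψ) ≫ eqToHom (rfl : z = z) ≫ δ = φ := by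
          simp only [eqToHom_refl, Category.id_comp, Category.assoc, e2, Category.comp_id]
        rw [ins_cons_ne _ hnid δ hδ' rest rfl
          (by rintro ⟨h, e⟩; exact hφ' ⟨h, by rw [← key, e]⟩)]
        have hred : Reduced ((⟨x, y, φ, hφ'⟩ : Letter B) :: rest) := by
          rw [Reduced, List.isChain_cons] at hl ⊢
          exact hl
        rw [ins_of_reduced_cons hred]
        congr 1
        exact Letter.ext' rfl rfl (by simp [e2])
      · -- composite ψ∘δ is not an identity
        rw [ins_cons_ne ψ hψ' δ hδ' rest rfl hide]
        have assoc1 : ∀ (h : x = w),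
            ((φ ≫ eqToHom (rfl : y = y) ≫ ψ) ≫ eqToHom (rfl : z = z) ≫ δ = eqToHom h) ↔
            (φ ≫ eqToHom (rfl : y = y) ≫ (ψ ≫ eqToHom (rfl : z = z) ≫ δ) = eqToHom h) := by
          intro h
          simp only [eqToHom_refl, Category.id_comp, Category.assoc]
        by_cases hbig : ∃ h : x = w,
            (φ ≫ eqToHom (rfl : y = y) ≫ ψ) ≫ eqToHom (rfl : z = z) ≫ δ = eqToHom h
        · obtain ⟨h3, e3⟩ := hbig
          rw [ins_cons_id _ hnid δ hδ' rest rfl ⟨h3, e3⟩,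
            ins_cons_id φ hφ' _ hide rest rfl ⟨h3, (assoc1 h3).1 e3⟩]
        · rw [ins_cons_ne _ hnid δ hδ' rest rfl hbig,
            ins_cons_ne φ hφ' _ hide rest rfl
              (by rintro ⟨h, e⟩; exact hbig ⟨h, (assoc1 h).2 e⟩)]
          congr 1
          exact Letter.ext' rfl rfl (by simp)
    · rw [ins_cons_nc ψ hψ' δ hδ' rest hbd,
        ins_cons_nc _ hnid δ hδ' rest hbd,
        ins_cons_ne φ hφ' ψ hψ' _ rfl hnid]
end CoeqAux
namespace CoeqAux
variable {B : Type u} [Category.{u} B]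
attribute [local instance] Classical.propDecidable

lemma mulL_ins (a : Letter B) {v w : List (Letter B)} (hv : Reduced v) (hw : Reduced w) :
    mulL (ins a v) w = ins a (mulL v w) := by
  cases v with
  | nil => rfl
  | cons b rest =>
    have hrw : Reduced (mulL rest w) := mulL_reduced rest hw
    rw [ins_cons]
    by_cases hc : a.Y = b.X
    · rw [dif_pos hc]
      by_cases hid : ∃ h : a.X = b.Y, (a.φ ≫ eqToHom hc ≫ b.φ) = eqToHom h
      · rw [dif_pos hid]
        exact (ins_ins_of_id hc hid hrw).symm
      · rw [dif_neg hid]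
        exact ins_comp a b hc hid hrw
    · rw [dif_neg hc]
      rfl

lemma mulL_assoc (u : List (Letter B)) {v w : List (Letter B)}
    (hv : Reduced v) (hw : Reduced w) :
    mulL (mulL u v) w = mulL u (mulL v w) := by
  induction u with
  | nil => rfl
  | cons a t ih =>
    rw [mulL_cons, mulL_ins a (mulL_reduced t hv) hw, ih, mulL_cons]

/-- The monoid of reduced words. -/
def W (B : Type u) [Category.{u} B] : Type u := {l : List (Letter B) // Reduced l}

noncomputable instance : Monoid (W B) where
  one := ⟨[], Reduced.nil⟩
  mul u v := ⟨mulL v.1 u.1, mulL_reduced v.1 u.2⟩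
  mul_assoc a b c := Subtype.ext (mulL_assoc c.1 b.2 a.2).symm
  one_mul a := Subtype.ext (mulL_nil_right a.2)
  mul_one _ := Subtype.ext rfl

lemma W.mul_def (u v : W B) : u * v = ⟨mulL v.1 u.1, mulL_reduced v.1 u.2⟩ := rfl
lemma W.one_def : (1 : W B) = ⟨[], Reduced.nil⟩ := rfl
end CoeqAux
namespace CoeqAux
variable {B : Type u} [Category.{u} B]
attribute [local instance] Classical.propDecidable

def W.mk (l : List (Letter B)) (h : Reduced l) : W B := ⟨l, h⟩

/-- The image of a morphism in the word monoid. -/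
noncomputable def delta {x y : B} (φ : x ⟶ y) : W B :=
  if h : ∃ h : x = y, φ = eqToHom h then 1
  else W.mk [⟨x, y, φ, h⟩] (Reduced.singleton _)

lemma delta_id (x : B) : delta (𝟙 x) = 1 :=
  dif_pos ⟨rfl, by simp⟩

lemma delta_comp {x y z : B} (φ : x ⟶ y) (ψ : y ⟶ z) :
    delta (φ ≫ ψ) = delta ψ * delta φ := by
  by_cases hφ : ∃ h : x = y, φ = eqToHom h
  · obtain ⟨h, e⟩ := hφ
    subst h
    simp only [eqToHom_refl] at e
    subst e
    rw [Category.id_comp, delta_id, mul_one]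
  · by_cases hψ : ∃ h : y = z, ψ = eqToHom h
    · obtain ⟨h, e⟩ := hψ
      subst h
      simp only [eqToHom_refl] at e
      subst e
      rw [Category.comp_id, delta_id, one_mul]
    · rw [delta, delta, delta, dif_neg hφ, dif_neg hψ, W.mul_def]
      by_cases hid : ∃ h : x = z, φ ≫ eqToHom (rfl : y = y) ≫ ψ = eqToHom h
      · rw [dif_pos (by simpa using hid)]
        exact Subtype.ext (ins_cons_id φ hφ ψ hψ [] rfl hid).symm
      · rw [dif_neg (by simpa using hid)]
        refine Subtype.ext ?_
        show [(⟨x, z, φ ≫ ψ, by simpa using hid⟩ : Letter B)] =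
          mulL [⟨x, y, φ, hφ⟩] [⟨y, z, ψ, hψ⟩]
        have hm : mulL [(⟨x, y, φ, hφ⟩ : Letter B)] [(⟨y, z, ψ, hψ⟩ : Letter B)] =
            ins ⟨x, y, φ, hφ⟩ [⟨y, z, ψ, hψ⟩] := rfl
        rw [hm, ins_cons_ne φ hφ ψ hψ [] rfl hid]
        congr 1
        exact Letter.ext' rfl rfl (by simp)

/-- A single-object category (in universe `u`) on the word monoid. -/
def SOb (B : Type u) [Category.{u} B] : Type u := PUnit.{u + 1}

/-- Diagrammatic-order composition on words. -/
noncomputable def Wcomp (x y : W B) : W B := ⟨mulL x.1 y.1, mulL_reduced x.1 y.2⟩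

noncomputable instance : Category.{u} (SOb B) where
  Hom _ _ := W B
  id _ := (1 : W B)
  comp {_ _ _} x y := Wcomp x y
  id_comp f := rfl
  comp_id f := Subtype.ext (mulL_nil_right f.2)
  assoc f g h := Subtype.ext (mulL_assoc f.1 g.2 h.2)

lemma SOb.id_def (s : SOb B) : 𝟙 s = (1 : W B) := rfl

lemma SOb.comp_def {s t r : SOb B} (m : s ⟶ t) (n : t ⟶ r) : m ≫ n = Wcomp m n := rfl

lemma Wcomp_eq_mul (x y : W B) : Wcomp x y = y * x := rfl

/-- The functor from `B` to the single-object category on the word monoid. -/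
noncomputable def Hfun (B : Type u) [Category.{u} B] : B ⥤ SOb B where
  obj _ := PUnit.unit
  map φ := delta φ
  map_id x := (delta_id x).trans (SOb.id_def _).symm
  map_comp f g := (delta_comp f g).trans ((Wcomp_eq_mul (delta f) (delta g)).symm.trans (SOb.comp_def (delta f) (delta g)).symm)

lemma SOb.key {P Q R S : SOb B} (h1 : P = Q) (h2 : R = S) (m : Q ⟶ R) :
    (eqToHom h1 ≫ m ≫ eqToHom h2 : P ⟶ S) = (m : W B) := by
  subst h1; subst h2; simp
end CoeqAux


open CoeqAux

/-- Let `Q = c.π` be the coequalizer in `Cat` of two functors defined on a discrete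
category.  If `f` and `g` are non-identity morphisms of `B` whose images under `Q`
coincide (after transporting along the equalities of the objects), then `f` and `g`
coincide. -/
theorem coequalizer_of_discrete_inj_on_nonidentity
    (A B : Cat.{u, u})
    (hA : ∀ (X Y : A) (f : X ⟶ Y), ∃ h : X = Y, f = eqToHom h)
    (F G : A ⟶ B) (c : Cofork F G) (hc : IsColimit c)
    {X Y X' Y' : B} (f : X ⟶ Y) (g : X' ⟶ Y')
    (hf : ¬ ∃ h : X = Y, f = eqToHom h)
    (hg : ¬ ∃ h : X' = Y', g = eqToHom h)
    (hX : c.π.toFunctor.obj X = c.π.toFunctor.obj X') (hY : c.π.toFunctor.obj Y = c.π.toFunctor.obj Y')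
    (hfg : c.π.toFunctor.map f = eqToHom hX ≫ c.π.toFunctor.map g ≫ eqToHom hY.symm) :
    ∃ (hX' : X = X') (hY' : Y = Y'), f = eqToHom hX' ≫ g ≫ eqToHom hY'.symm := by
  classical
  let H : B ⟶ Cat.of (SOb ↑B) := (Hfun ↑B).toCatHom
  have comm : F ≫ H = G ≫ H := by
    refine Cat.Hom.ext (CategoryTheory.Functor.ext (fun a => rfl) ?_)
    intro a b φ
    obtain ⟨h, e⟩ := hA a b φ
    subst h
    simp only [eqToHom_refl] at e
    subst e
    show H.toFunctor.map (F.toFunctor.map (𝟙 a)) = _ ≫ H.toFunctor.map (G.toFunctor.map (𝟙 a)) ≫ _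
    rw [F.toFunctor.map_id, G.toFunctor.map_id, H.toFunctor.map_id, H.toFunctor.map_id]
    exact (SOb.key _ _ _).symm
  let K : c.pt ⟶ Cat.of (SOb ↑B) := Cofork.IsColimit.desc hc H comm
  have hπ : c.π ≫ K = H := Cofork.IsColimit.π_desc' hc H comm
  have e1 : (H.toFunctor.map f : W ↑B) = K.toFunctor.map (c.π.toFunctor.map f) := by
    rw [Functor.congr_hom (congrArg Cat.Hom.toFunctor hπ.symm) f]
    exact SOb.key _ _ _
  have e2 : (H.toFunctor.map g : W ↑B) = K.toFunctor.map (c.π.toFunctor.map g) := by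
    rw [Functor.congr_hom (congrArg Cat.Hom.toFunctor hπ.symm) g]
    exact SOb.key _ _ _
  have e3 : (H.toFunctor.map f : W ↑B) = H.toFunctor.map g := by
    rw [e1, e2, hfg, K.toFunctor.map_comp, K.toFunctor.map_comp, eqToHom_map, eqToHom_map]
    exact SOb.key _ _ _
  have e4 : delta f = delta g := e3
  simp only [delta, dif_neg hf, dif_neg hg] at e4
  have e5 : [(⟨X, Y, f, hf⟩ : Letter ↑B)] = [(⟨X', Y', g, hg⟩ : Letter ↑B)] :=
    congrArg Subtype.val e4
  have e6 : (⟨X, Y, f, hf⟩ : Letter ↑B) = ⟨X', Y', g, hg⟩ := by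
    injection e5
  injection e6 with hX' hY' hphi
  subst hX'
  subst hY'
  exact ⟨rfl, rfl, by simpa using eq_of_heq hphi⟩
end

section
/- Let A be a discrete small category, let F, G : A ⥤ B be two functors into a small category B, and let Q : B ⥤ Q be the coequalizer of F and G in Cat. A morphism φ of Q is an isomorphism if and only if φ belongs to the smallest class of morphisms of Q that contains all morphisms induced by equalities of objects of Q (the eqToHom morphisms), contains Q(g) for every isomorphism g of B, and is closed under composition. -/
open CategoryTheory Limits
universe u

/-- The smallest class of morphisms of the codomain of a functor `F : B ⥤ Q` which
contains all `eqToHom` morphisms, contains the image `F.map g` of every isomorphism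
`g` of `B`, and is closed under composition. -/
inductive IsoGenerated {B Q : Type u} [Category.{u} B] [Category.{u} Q] (F : B ⥤ Q) :
    ∀ {X Y : Q}, (X ⟶ Y) → Prop
  | eqToHom {X Y : Q} (h : X = Y) : IsoGenerated F (CategoryTheory.eqToHom h)
  | img {X Y : B} (g : X ⟶ Y) (hg : IsIso g) : IsoGenerated F (F.map g)
  | comp {X Y Z : Q} {f : X ⟶ Y} {g : Y ⟶ Z} :
      IsoGenerated F f → IsoGenerated F g → IsoGenerated F (f ≫ g)

namespace CoeqIso
variable {B : Type u} [Category.{u} B]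

structure Ltr (B : Type u) [Category.{u} B] : Type u where
  a : B
  b : B
  f : a ⟶ b

def IsId {a b : B} (f : a ⟶ b) : Prop := ∃ h : a = b, f = eqToHom h

open scoped Classical in
noncomputable def rawPost (x : Ltr B) : List (Ltr B) → List (Ltr B)
  | [] => if IsId x.f then [] else [x]
  | l :: rest =>
    if h : l.b = x.a then
      if IsId (l.f ≫ eqToHom h ≫ x.f) then rest
      else ⟨l.a, x.b, l.f ≫ eqToHom h ≫ x.f⟩ :: rest
    else if IsId x.f then l :: rest else x :: l :: rest

def NC (x y : Ltr B) : Prop := ¬ (y.b = x.a)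

def Red (w : List (Ltr B)) : Prop := (∀ l ∈ w, ¬ IsId l.f) ∧ w.Chain' NC

lemma isId_eqToHom {a b : B} (h : a = b) : IsId (eqToHom h) := ⟨h, rfl⟩

lemma isId_id (a : B) : IsId (𝟙 a) := ⟨rfl, by simp⟩

lemma isId_comp_left {a b c : B} {f : a ⟶ b} (hf : IsId f) (g : b ⟶ c) :
    IsId (f ≫ g) ↔ IsId g := by
  obtain ⟨h, rfl⟩ := hf; subst h
  simp only [eqToHom_refl, Category.id_comp]

lemma isId_comp_right {a b c : B} (f : a ⟶ b) {g : b ⟶ c} (hg : IsId g) :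
    IsId (f ≫ g) ↔ IsId f := by
  obtain ⟨h, rfl⟩ := hg; subst h
  simp only [eqToHom_refl, Category.comp_id]

lemma red_of_red_cons {l : Ltr B} {w : List (Ltr B)} (h : Red (l :: w)) : Red w :=
  ⟨fun x hx => h.1 x (List.mem_cons_of_mem _ hx), h.2.tail⟩

lemma red_append_left {v u : List (Ltr B)} (h : Red (v ++ u)) : Red v :=
  ⟨fun x hx => h.1 x (by simp [hx]), (List.isChain_append.mp h.2).1⟩

lemma red_append_right {v u : List (Ltr B)} (h : Red (v ++ u)) : Red u :=
  ⟨fun x hx => h.1 x (by simp [hx]), (List.isChain_append.mp h.2).2.1⟩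

lemma rawFold_eq_self {w : List (Ltr B)} (h : Red w) : w.foldr rawPost [] = w := by
  induction w with
  | nil => rfl
  | cons l w ih =>
    have hw := red_of_red_cons h
    simp only [List.foldr_cons, ih hw]
    cases w with
    | nil => simp [rawPost, h.1 l (by simp)]
    | cons l₂ w₂ =>
      have hnc : ¬ (l₂.b = l.a) := List.isChain_cons_cons.mp h.2 |>.1
      simp [rawPost, hnc, h.1 l (by simp)]

/-- If the seam between `v` and `u` never allows a merge, the fold never empties. -/
lemma nofold : ∀ (v u : List (Ltr B)), Red (v ++ u) → u ≠ [] → v.foldr rawPost u ≠ [] := by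
  intro v
  induction v using List.reverseRecOn with
  | nil => intro u _ hu; simpa using hu
  | append_singleton v' y ih =>
    intro u hred hu
    rw [List.foldr_append]
    have hseam : ∀ l ∈ u.head?, NC y l := by
      have := (List.isChain_append.mp hred.2).2.2
      intro l hl
      exact this y (by simp) l hl
    have hy : ¬ IsId y.f := hred.1 y (by simp)
    cases u with
    | nil => exact absurd rfl hu
    | cons l u' =>
      have hnc : ¬ (l.b = y.a) := hseam l rfl
      have heq : rawPost y (l :: u') = y :: l :: u' := by simp [rawPost, hnc, hy]
      simp only [List.foldr_cons, List.foldr_nil]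
      rw [heq]
      apply ih (y :: l :: u')
      · have : v' ++ y :: l :: u' = (v' ++ [y]) ++ (l :: u') := by simp
        rw [this]; exact hred
      · simp

lemma cancel : ∀ (v u : List (Ltr B)), Red v → Red u → v.foldr rawPost u = [] →
    (∀ l ∈ u, ∃ x : Ltr B, ∃ h : l.b = x.a, IsId (l.f ≫ eqToHom h ≫ x.f)) ∧
    (∀ l ∈ v, ∃ x : Ltr B, ∃ h : x.b = l.a, IsId (x.f ≫ eqToHom h ≫ l.f)) := by
  intro v
  induction v using List.reverseRecOn with
  | nil =>
    intro u _ hu hfold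
    simp only [List.foldr_nil] at hfold
    subst hfold
    exact ⟨by simp, by simp⟩
  | append_singleton v' y ih =>
    intro u hv hu hfold
    rw [List.foldr_append] at hfold
    simp only [List.foldr_cons, List.foldr_nil] at hfold
    have hy : ¬ IsId y.f := hv.1 y (by simp)
    have hv' : Red v' := red_append_left hv
    have hseam : ∀ l ∈ v'.getLast?, NC l y := by
      have := (List.isChain_append.mp hv.2).2.2
      intro l hl
      exact this l hl y rfl
    cases u with
    | nil =>
      -- rawPost y [] = [y], then fold of v' on [y] must be [], contradiction with nofold
      have h1 : rawPost y [] = [y] := by simp [rawPost, hy]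
      rw [h1] at hfold
      exfalso
      refine nofold v' [y] ?_ (by simp) hfold
      constructor
      · intro x hx
        rcases List.mem_append.mp hx with h | h
        · exact hv'.1 x h
        · simp at h; subst h; exact hy
      · refine List.isChain_append.mpr ?_
        refine ⟨hv'.2, by simp, ?_⟩
        intro x hx z hz
        simp at hz; subst hz
        exact hseam x hx
    | cons l u' =>
      by_cases hc : l.b = y.a
      · by_cases hid : IsId (l.f ≫ eqToHom hc ≫ y.f)
        · -- telescoping cancellation
          have h1 : rawPost y (l :: u') = u' := by simp [rawPost, hc, hid]
          rw [h1] at hfold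
          obtain ⟨H1, H2⟩ := ih u' hv' (red_of_red_cons hu) hfold
          refine ⟨?_, ?_⟩
          · intro x hx
            rcases List.mem_cons.mp hx with h | h
            · subst h; exact ⟨y, hc, hid⟩
            · exact H1 x h
          · intro x hx
            rcases List.mem_append.mp hx with h | h
            · exact H2 x h
            · simp at h; subst h
              exact ⟨l, hc, hid⟩
        · -- merge to a non-identity: contradiction via nofold
          exfalso
          have h1 : rawPost y (l :: u') = ⟨l.a, y.b, l.f ≫ eqToHom hc ≫ y.f⟩ :: u' := by
            simp [rawPost, hc, hid]
          rw [h1] at hfold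
          refine nofold v' _ ?_ (by simp) hfold
          constructor
          · intro x hx
            rcases List.mem_append.mp hx with h | h
            · exact hv'.1 x h
            · rcases List.mem_cons.mp h with h' | h'
              · subst h'; exact hid
              · exact hu.1 x (List.mem_cons_of_mem _ h')
          · refine List.isChain_append.mpr ?_
            refine ⟨hv'.2, ?_, ?_⟩
            · rw [List.isChain_cons]
              refine ⟨?_, hu.2.tail⟩
              intro z hz
              have := List.isChain_cons.mp hu.2 |>.1 z hz
              simpa [NC] using this
            · intro x hx z hz
              simp at hz; subst hz
              have := hseam x hx
              simpa [NC] using this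
      · -- no merge possible: contradiction via nofold
        exfalso
        have h1 : rawPost y (l :: u') = y :: l :: u' := by simp [rawPost, hc, hy]
        rw [h1] at hfold
        refine nofold v' _ ?_ (by simp) hfold
        constructor
        · intro x hx
          rcases List.mem_append.mp hx with h | h
          · exact hv'.1 x h
          · rcases List.mem_cons.mp h with h' | h'
            · subst h'; exact hy
            · exact hu.1 x h'
        · refine List.isChain_append.mpr ?_
          refine ⟨hv'.2, ?_, ?_⟩
          · rw [List.isChain_cons_cons]
            exact ⟨hc, hu.2⟩
          · intro x hx z hz
            simp at hz; subst hz
            exact hseam x hx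

/-- The action of an `IsId` letter is trivial on reduced words. -/
lemma rawPost_isId {w : List (Ltr B)} (h2 : Red w) (x : Ltr B) (hx : IsId x.f) :
    rawPost x w = w := by
  rcases x with ⟨xa, xb, xf⟩
  obtain ⟨h, hfe⟩ := hx
  dsimp at h hfe
  subst h
  rw [eqToHom_refl] at hfe
  subst hfe
  cases w with
  | nil => simp [rawPost, isId_id]
  | cons l rest =>
    by_cases hc : l.b = xa
    · subst hc
      have hl : ¬ IsId l.f := h2.1 l (by simp)
      simp [rawPost, hl]
    · simp [rawPost, hc, isId_id]

/-- Functoriality of the letter action on reduced words. -/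
lemma rawPost_comp {a b c : B} (f : a ⟶ b) (g : b ⟶ c) {w : List (Ltr B)} (h2 : Red w) :
    rawPost ⟨b, c, g⟩ (rawPost ⟨a, b, f⟩ w) = rawPost ⟨a, c, f ≫ g⟩ w := by
  by_cases hf : IsId f
  · obtain ⟨h, hfe⟩ := hf; subst h
    rw [eqToHom_refl] at hfe; subst hfe
    rw [rawPost_isId h2 _ (isId_id a)]
    rw [Category.id_comp]
  · cases w with
    | nil =>
      have h1 : rawPost ⟨a, b, f⟩ [] = [⟨a, b, f⟩] := by simp [rawPost, hf]
      rw [h1]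
      by_cases hg : IsId (f ≫ g)
      · simp [rawPost, hg]
      · simp [rawPost, hg]
    | cons l rest =>
      by_cases hc : l.b = a
      · subst hc
        by_cases hm : IsId (l.f ≫ f)
        · -- merged is idlike : l.a = b, deletion
          have h1 : rawPost ⟨l.b, b, f⟩ (l :: rest) = rest := by
            simp [rawPost, hm]
          rw [h1]
          obtain ⟨hab, hfe⟩ := hm
          -- l.f ≫ f = eqToHom hab  (hab : l.a = b)
          have key : l.f ≫ f ≫ g = eqToHom hab ≫ g := by
            rw [← Category.assoc, hfe]
          cases rest with
          | nil =>
            by_cases hg : IsId g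
            · have h3 : IsId (l.f ≫ f ≫ g) := by
                rw [key]; exact (isId_comp_left (isId_eqToHom hab) g).mpr hg
              simp [rawPost, hg, h3]
            · have h3 : ¬ IsId (l.f ≫ f ≫ g) := by
                rw [key]; exact fun hh => hg ((isId_comp_left (isId_eqToHom hab) g).mp hh)
              simp only [rawPost, dif_pos rfl, eqToHom_refl, Category.id_comp,
                if_neg hg, if_neg h3]
              rw [key]
              subst hab
              simp [h3]
          | cons l2 rest2 =>
            have hnc : ¬ (l2.b = l.a) := List.isChain_cons_cons.mp h2.2 |>.1
            have hnc2 : ¬ (l2.b = b) := by rw [← hab]; exact hnc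
            by_cases hg : IsId g
            · have h3 : IsId (l.f ≫ f ≫ g) := by
                rw [key]; exact (isId_comp_left (isId_eqToHom hab) g).mpr hg
              simp [rawPost, hg, h3, hnc2]
            · have h3 : ¬ IsId (l.f ≫ f ≫ g) := by
                rw [key]; exact fun hh => hg ((isId_comp_left (isId_eqToHom hab) g).mp hh)
              simp only [rawPost, dif_pos rfl, dif_neg hnc2, eqToHom_refl,
                Category.id_comp, if_neg hg, if_neg h3]
              rw [key]
              subst hab
              simp [h3]
        · -- merged is kept
          have h1 : rawPost ⟨l.b, b, f⟩ (l :: rest) = ⟨l.a, b, l.f ≫ f⟩ :: rest := by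
            simp [rawPost, hm]
          rw [h1]
          by_cases hmm : IsId (l.f ≫ f ≫ g)
          · have h3 : IsId ((l.f ≫ f) ≫ g) := by rw [Category.assoc]; exact hmm
            simp [rawPost, h3, hmm]
          · have h3 : ¬ IsId ((l.f ≫ f) ≫ g) := by rw [Category.assoc]; exact hmm
            simp [rawPost, h3, hmm]
      · -- not composable, f not idlike
        have h1 : rawPost ⟨a, b, f⟩ (l :: rest) = ⟨a, b, f⟩ :: l :: rest := by
          simp [rawPost, hc, hf]
        rw [h1]
        by_cases hg : IsId (f ≫ g)
        · simp [rawPost, hc, hg]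
        · simp [rawPost, hc, hg]

variable {Q : Type u} [Category.{u} Q]

def Ends (π : B ⥤ Q) (w : List (Ltr B)) (t : Q) : Prop := ∀ l ∈ w.head?, π.obj l.b = t

def Vld (π : B ⥤ Q) (w : List (Ltr B)) : Prop :=
  w.Chain' (fun x y => π.obj y.b = π.obj x.a)

lemma post_pres (π : B ⥤ Q) {a b : B} (f : a ⟶ b) {w : List (Ltr B)}
    (h1 : Vld π w) (h2 : Red w) (h3 : Ends π w (π.obj a)) :
    Vld π (rawPost ⟨a, b, f⟩ w) ∧ Red (rawPost ⟨a, b, f⟩ w) ∧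
      Ends π (rawPost ⟨a, b, f⟩ w) (π.obj b) := by
  classical
  cases w with
  | nil =>
    by_cases hf : IsId f
    · simp only [rawPost, if_pos hf]
      exact ⟨List.isChain_nil, ⟨by simp, List.isChain_nil⟩, by simp [Ends]⟩
    · simp only [rawPost, if_neg hf]
      exact ⟨List.isChain_singleton _, ⟨by simpa using hf, List.isChain_singleton _⟩,
        by simp [Ends]⟩
  | cons l rest =>
    have hl3 : π.obj l.b = π.obj a := h3 l rfl
    by_cases hc : l.b = a
    · by_cases hm : IsId (l.f ≫ eqToHom hc ≫ f)
      · simp only [rawPost, dif_pos hc, if_pos hm]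
        refine ⟨h1.tail, ⟨fun x hx => h2.1 x (List.mem_cons_of_mem _ hx), h2.2.tail⟩, ?_⟩
        obtain ⟨hab, _⟩ := hm
        intro z hz
        cases rest with
        | nil => simp at hz
        | cons z' rest' =>
          simp at hz; subst hz
          have := List.isChain_cons_cons.mp h1 |>.1
          rw [this, hab]
      · simp only [rawPost, dif_pos hc, if_neg hm]
        refine ⟨?_, ⟨?_, ?_⟩, ?_⟩
        · cases rest with
          | nil => exact List.isChain_singleton _
          | cons z' rest' =>
            exact List.isChain_cons_cons.mpr ⟨List.isChain_cons_cons.mp h1 |>.1, h1.tail⟩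
        · intro x hx
          rcases List.mem_cons.mp hx with h | h
          · subst h; exact hm
          · exact h2.1 x (List.mem_cons_of_mem _ h)
        · cases rest with
          | nil => exact List.isChain_singleton _
          | cons z' rest' =>
            exact List.isChain_cons_cons.mpr ⟨List.isChain_cons_cons.mp h2.2 |>.1, h2.2.tail⟩
        · intro z hz
          simp at hz; subst hz; rfl
    · by_cases hf : IsId f
      · simp only [rawPost, dif_neg hc, if_pos hf]
        obtain ⟨hab, _⟩ := hf
        refine ⟨h1, h2, ?_⟩
        intro z hz
        simp at hz; subst hz
        rw [hl3, hab]
      · simp only [rawPost, dif_neg hc, if_neg hf]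
        refine ⟨?_, ⟨?_, ?_⟩, ?_⟩
        · exact List.isChain_cons_cons.mpr ⟨hl3, h1⟩
        · intro x hx
          rcases List.mem_cons.mp hx with h | h
          · subst h; exact hf
          · exact h2.1 x h
        · exact List.isChain_cons_cons.mpr ⟨hc, h2.2⟩
        · intro z hz
          simp at hz; subst hz; rfl


variable (π : B ⥤ Q)

/-- Subtype of valid reduced words ending at `t`. -/
def S (t : Q) : Type u := {w : List (Ltr B) // Vld π w ∧ Red w ∧ Ends π w t}

/-- Objects of the auxiliary category of "word actions". -/
structure RObj (π : B ⥤ Q) : Type u where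
  t : Q

instance : Category.{u} (RObj π) where
  Hom o o' := S π o.t → S π o'.t
  id _ := id
  comp f g := g ∘ f
  id_comp _ := rfl
  comp_id _ := rfl
  assoc _ _ _ := rfl

/-- Application of a morphism of `RObj`. -/
def appR {o o' : RObj π} (f : o ⟶ o') : S π o.t → S π o'.t := f

lemma appR_comp {o o' o'' : RObj π} (f : o ⟶ o') (g : o' ⟶ o'') (s : S π o.t) :
    appR π (f ≫ g) s = appR π g (appR π f s) := rfl

lemma appR_eqToHom_val {o o' : RObj π} (h : o = o') (s : S π o.t) :
    (appR π (eqToHom h) s).val = s.val := by subst h; rfl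

/-- The letter action. -/
noncomputable def postS {a b : B} (f : a ⟶ b) : S π (π.obj a) → S π (π.obj b) :=
  fun s => ⟨rawPost ⟨a, b, f⟩ s.val, post_pres π f s.2.1 s.2.2.1 s.2.2.2⟩

/-- The canonical functor from `B` to the category of word actions. -/
noncomputable def DFunc : B ⥤ RObj π where
  obj a := ⟨π.obj a⟩
  map {a b} f := postS π f
  map_id a := funext fun s => Subtype.ext (rawPost_isId s.2.2.1 _ (isId_id a))
  map_comp {a b c} f g := funext fun s => Subtype.ext (rawPost_comp f g s.2.2.1).symm

/-- Morphisms generated by `eqToHom`s and all images `π.map g`, closed under composition. -/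
inductive GenAll : ∀ {X Y : Q}, (X ⟶ Y) → Prop
  | eqToHom {X Y : Q} (h : X = Y) : GenAll (CategoryTheory.eqToHom h)
  | img {x y : B} (g : x ⟶ y) : GenAll (π.map g)
  | comp {X Y Z : Q} {f : X ⟶ Y} {g : Y ⟶ Z} : GenAll f → GenAll g → GenAll (f ≫ g)

/-- The wide subcategory of `Q` on the `GenAll` morphisms. -/
structure WObj (π : B ⥤ Q) : Type u where
  t : Q

instance : Category.{u} (WObj π) where
  Hom o o' := {f : o.t ⟶ o'.t // GenAll π f}
  id o := ⟨𝟙 o.t, by rw [← eqToHom_refl o.t rfl]; exact .eqToHom rfl⟩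
  comp f g := ⟨f.val ≫ g.val, f.2.comp g.2⟩
  id_comp _ := Subtype.ext (Category.id_comp _)
  comp_id _ := Subtype.ext (Category.comp_id _)
  assoc _ _ _ := Subtype.ext (Category.assoc _ _ _)

def DW : B ⥤ WObj π where
  obj a := ⟨π.obj a⟩
  map f := ⟨π.map f, .img f⟩
  map_id a := Subtype.ext (π.map_id a)
  map_comp f g := Subtype.ext (π.map_comp f g)

def projW : WObj π ⥤ Q where
  obj o := o.t
  map f := f.val

/-- Evaluation relation: the word `w` (latest letter first) evaluates to `φ`. -/
inductive EvalRel : List (Ltr B) → ∀ {X Y : Q}, (X ⟶ Y) → Prop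
  | nil {X Y : Q} (h : X = Y) : EvalRel [] (CategoryTheory.eqToHom h)
  | cons {X : Q} {a b : B} (f : a ⟶ b) {w : List (Ltr B)} {ψ : X ⟶ π.obj a}
      (hw : EvalRel w ψ) {Y : Q} (h : π.obj b = Y) :
      EvalRel (⟨a, b, f⟩ :: w) (ψ ≫ π.map f ≫ CategoryTheory.eqToHom h)

lemma EvalRel.cast {w : List (Ltr B)} {X Y : Q} {φ φ' : X ⟶ Y} (h : EvalRel π w φ)
    (e : φ = φ') : EvalRel π w φ' := e ▸ h

lemma EvalRel.compEq {w : List (Ltr B)} {X Y : Q} {φ : X ⟶ Y} (h : EvalRel π w φ)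
    {Y' : Q} (e : Y = Y') : EvalRel π w (φ ≫ CategoryTheory.eqToHom e) := by
  cases h with
  | nil h0 => exact (EvalRel.nil (h0.trans e)).cast π (by simp)
  | cons f hw h0 => exact (EvalRel.cons f hw (h0.trans e)).cast π (by simp)

lemma EvalRel.eqComp {w : List (Ltr B)} {X Y : Q} {φ : X ⟶ Y} (h : EvalRel π w φ)
    {X' : Q} (e : X' = X) : EvalRel π w (CategoryTheory.eqToHom e ≫ φ) := by
  induction h with
  | nil h0 => exact (EvalRel.nil (e.trans h0)).cast π (by simp)
  | cons f hw h0 ih => exact (EvalRel.cons f (ih e) h0).cast π (by simp)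

lemma EvalRel.concat {w v : List (Ltr B)} {X Y Z : Q} {ψ : X ⟶ Y} {χ : Y ⟶ Z}
    (h1 : EvalRel π w ψ) (h2 : EvalRel π v χ) : EvalRel π (v ++ w) (ψ ≫ χ) := by
  induction h2 with
  | nil h0 => simpa using h1.compEq π h0
  | cons f hw h0 ih =>
    exact (EvalRel.cons f (ih h1) h0).cast π (by simp)


lemma evalRel_of_genAll {X Y : Q} {φ : X ⟶ Y} (h : GenAll π φ) :
    ∃ w, EvalRel π w φ := by
  induction h with
  | eqToHom h => exact ⟨[], .nil h⟩
  | img g => exact ⟨[⟨_, _, g⟩], (EvalRel.cons g (.nil rfl) rfl).cast π (by simp)⟩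
  | comp h1 h2 ih1 ih2 =>
    obtain ⟨w1, e1⟩ := ih1
    obtain ⟨w2, e2⟩ := ih2
    exact ⟨w2 ++ w1, e1.concat π e2⟩

lemma evalRel_rawPost {X : Q} {a b : B} (f : a ⟶ b) {w : List (Ltr B)} {ψ : X ⟶ π.obj a}
    (hw : EvalRel π w ψ) {Y : Q} (h : π.obj b = Y) :
    EvalRel π (rawPost ⟨a, b, f⟩ w) (ψ ≫ π.map f ≫ CategoryTheory.eqToHom h) := by
  classical
  cases hw with
  | nil h0 =>
    by_cases hf : IsId f
    · obtain ⟨hab, hfe⟩ := hf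
      have hf' : IsId f := ⟨hab, hfe⟩
      have hr : rawPost ⟨a, b, f⟩ [] = [] := by simp [rawPost, hf']
      rw [hr]
      refine (EvalRel.nil ((h0.trans (congrArg π.obj hab)).trans h)).cast π ?_
      rw [hfe]
      simp [eqToHom_map]
    · have hr : rawPost ⟨a, b, f⟩ [] = [⟨a, b, f⟩] := by simp [rawPost, hf]
      rw [hr]
      exact EvalRel.cons f (.nil h0) h
  | cons g hw' h1 =>
    rename_i x y w' ψ'
    -- ψ = ψ' ≫ π.map g ≫ eqToHom h1,  h1 : π.obj y = π.obj a
    by_cases hc : y = a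
    · subst hc
      by_cases hm : IsId (g ≫ eqToHom rfl ≫ f)
      · obtain ⟨hab, hme⟩ := hm
        simp only [eqToHom_refl, Category.id_comp] at hme
        have hr : rawPost ⟨y, b, f⟩ (⟨x, y, g⟩ :: w') = w' := by
          simp [rawPost, hme, isId_eqToHom]
        rw [hr]
        refine (hw'.compEq π ((congrArg π.obj hab).trans h)).cast π ?_
        have h1e : CategoryTheory.eqToHom h1 = 𝟙 (π.obj y) := by
          simp
        rw [h1e]
        simp only [Category.id_comp, Category.assoc]
        rw [← Category.assoc (π.map g), ← π.map_comp, hme]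
        simp [eqToHom_map]
      · have hr : rawPost ⟨y, b, f⟩ (⟨x, y, g⟩ :: w') =
            ⟨x, b, g ≫ eqToHom rfl ≫ f⟩ :: w' := by
          simp only [rawPost]
          rw [dif_pos trivial, if_neg hm]
        rw [hr]
        refine (EvalRel.cons (g ≫ eqToHom rfl ≫ f) hw' h).cast π ?_
        have h1e : CategoryTheory.eqToHom h1 = 𝟙 (π.obj y) := by simp
        rw [h1e]
        simp
    · by_cases hf : IsId f
      · obtain ⟨hab, hfe⟩ := hf
        have hf' : IsId f := ⟨hab, hfe⟩
        have hr : rawPost ⟨a, b, f⟩ (⟨x, y, g⟩ :: w') = ⟨x, y, g⟩ :: w' := by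
          simp [rawPost, hc, hf']
        rw [hr]
        refine ((EvalRel.cons g hw' h1).compEq π ((congrArg π.obj hab).trans h)).cast π ?_
        rw [hfe]
        simp [eqToHom_map]
      · have hr : rawPost ⟨a, b, f⟩ (⟨x, y, g⟩ :: w') = ⟨a, b, f⟩ :: ⟨x, y, g⟩ :: w' := by
          simp [rawPost, hc, hf]
        rw [hr]
        exact EvalRel.cons f (EvalRel.cons g hw' h1) h

lemma evalRel_red {X Y : Q} {φ : X ⟶ Y} {w : List (Ltr B)} (hw : EvalRel π w φ) :
    EvalRel π (w.foldr rawPost []) φ ∧ Vld π (w.foldr rawPost []) ∧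
      Red (w.foldr rawPost []) ∧ Ends π (w.foldr rawPost []) Y := by
  induction hw with
  | nil h => exact ⟨.nil h, List.isChain_nil, ⟨by simp, List.isChain_nil⟩, by simp [Ends]⟩
  | cons f hw h ih =>
    obtain ⟨e, v1, r1, en1⟩ := ih
    have pp := post_pres π f v1 r1 en1
    subst h
    exact ⟨evalRel_rawPost π f e rfl, pp.1, pp.2.1, pp.2.2⟩


/-- The empty word. -/
def nilS (X : Q) : S π X := ⟨[], List.isChain_nil, ⟨by simp, List.isChain_nil⟩, by simp [Ends]⟩

lemma sigma_val {LR : Q ⥤ RObj π} (hLD : π ⋙ LR = DFunc π)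
    (hLobj : ∀ X : Q, LR.obj X = ⟨X⟩) {X Y : Q} {φ : X ⟶ Y} {w : List (Ltr B)}
    (hw : EvalRel π w φ) (s : S π X) :
    (appR π (CategoryTheory.eqToHom (hLobj X).symm ≫ LR.map φ ≫
        CategoryTheory.eqToHom (hLobj Y)) s).val = w.foldr rawPost s.val := by
  induction hw with
  | nil h =>
    rw [eqToHom_map LR, eqToHom_trans, eqToHom_trans, List.foldr_nil, appR_eqToHom_val]
  | @cons X' a b f w' ψ hw' Y' h ih =>
    have key : CategoryTheory.eqToHom (hLobj X').symm ≫
          LR.map (ψ ≫ π.map f ≫ CategoryTheory.eqToHom h) ≫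
          CategoryTheory.eqToHom (hLobj Y') =
        (CategoryTheory.eqToHom (hLobj X').symm ≫ LR.map ψ ≫
            CategoryTheory.eqToHom (hLobj (π.obj a))) ≫
          (DFunc π).map f ≫
          CategoryTheory.eqToHom (show (⟨π.obj b⟩ : RObj π) = ⟨Y'⟩ by rw [h]) := by
      have hf := Functor.congr_hom hLD f
      simp only [Functor.comp_map] at hf
      rw [Functor.map_comp, Functor.map_comp, eqToHom_map LR, hf]
      simp [eqToHom_trans]
      rfl
    rw [key, appR_comp (f := CategoryTheory.eqToHom (hLobj X').symm ≫ LR.map ψ ≫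
      CategoryTheory.eqToHom (hLobj (π.obj a)))]
    erw [appR_comp (f := (DFunc π).map f), appR_eqToHom_val]
    have : appR π ((DFunc π).map f)
        (appR π (CategoryTheory.eqToHom (hLobj X').symm ≫ LR.map ψ ≫
          CategoryTheory.eqToHom (hLobj (π.obj a))) s) =
        postS π f (appR π (CategoryTheory.eqToHom (hLobj X').symm ≫ LR.map ψ ≫
          CategoryTheory.eqToHom (hLobj (π.obj a))) s) := rfl
    erw [this]
    show rawPost ⟨a, b, f⟩ _ = _
    rw [ih]
    rfl

/-- A letter with quasi-inverses on both sides is an isomorphism. -/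
lemma isIso_letter {l : Ltr B}
    (h1 : ∃ x : Ltr B, ∃ h : l.b = x.a, IsId (l.f ≫ eqToHom h ≫ x.f))
    (h2 : ∃ x : Ltr B, ∃ h : x.b = l.a, IsId (x.f ≫ eqToHom h ≫ l.f)) : IsIso l.f := by
  obtain ⟨x, hx, e1, he1⟩ := h1
  obtain ⟨z, hz, e2, he2⟩ := h2
  have hr : l.f ≫ (CategoryTheory.eqToHom hx ≫ x.f ≫ CategoryTheory.eqToHom e1.symm) =
      𝟙 l.a := by
    have := he1
    calc l.f ≫ CategoryTheory.eqToHom hx ≫ x.f ≫ CategoryTheory.eqToHom e1.symm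
        = (l.f ≫ CategoryTheory.eqToHom hx ≫ x.f) ≫ CategoryTheory.eqToHom e1.symm := by
          simp only [Category.assoc]
      _ = CategoryTheory.eqToHom e1 ≫ CategoryTheory.eqToHom e1.symm := by rw [he1]
      _ = 𝟙 l.a := by simp
  have hs : (CategoryTheory.eqToHom e2.symm ≫ z.f ≫ CategoryTheory.eqToHom hz) ≫ l.f =
      𝟙 l.b := by
    calc (CategoryTheory.eqToHom e2.symm ≫ z.f ≫ CategoryTheory.eqToHom hz) ≫ l.f
        = CategoryTheory.eqToHom e2.symm ≫ (z.f ≫ CategoryTheory.eqToHom hz ≫ l.f) := by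
          simp only [Category.assoc]
      _ = CategoryTheory.eqToHom e2.symm ≫ CategoryTheory.eqToHom e2 := by rw [he2]
      _ = 𝟙 l.b := by simp
  refine ⟨CategoryTheory.eqToHom hx ≫ x.f ≫ CategoryTheory.eqToHom e1.symm, hr, ?_⟩
  have : CategoryTheory.eqToHom hx ≫ x.f ≫ CategoryTheory.eqToHom e1.symm =
      CategoryTheory.eqToHom e2.symm ≫ z.f ≫ CategoryTheory.eqToHom hz := by
    calc CategoryTheory.eqToHom hx ≫ x.f ≫ CategoryTheory.eqToHom e1.symm
        = 𝟙 l.b ≫ (CategoryTheory.eqToHom hx ≫ x.f ≫ CategoryTheory.eqToHom e1.symm) := by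
          simp
      _ = ((CategoryTheory.eqToHom e2.symm ≫ z.f ≫ CategoryTheory.eqToHom hz) ≫ l.f) ≫
            (CategoryTheory.eqToHom hx ≫ x.f ≫ CategoryTheory.eqToHom e1.symm) := by rw [hs]
      _ = (CategoryTheory.eqToHom e2.symm ≫ z.f ≫ CategoryTheory.eqToHom hz) ≫
            (l.f ≫ CategoryTheory.eqToHom hx ≫ x.f ≫ CategoryTheory.eqToHom e1.symm) := by
          simp only [Category.assoc]
      _ = CategoryTheory.eqToHom e2.symm ≫ z.f ≫ CategoryTheory.eqToHom hz := by
          rw [hr]; simp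
  rw [this]
  exact hs

lemma discrete_funext {A : Type u} [Category.{u} A] {C : Type u} [Category.{u} C]
    (hA : ∀ (X Y : A) (f : X ⟶ Y), ∃ h : X = Y, f = eqToHom h)
    {H K : A ⥤ C} (hobj : ∀ a, H.obj a = K.obj a) : H = K := by
  refine CategoryTheory.Functor.ext hobj (fun X Y f => ?_)
  obtain ⟨h, rfl⟩ := hA X Y f
  subst h
  simp [eqToHom_map]

lemma fullsub_ext {C : Type u} [Category.{u} C] {P : C → Prop}
    {o o' : ObjectProperty.FullSubcategory P} (h : o.obj = o'.obj) : o = o' := by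
  cases o; cases o'; cases h; rfl


lemma isoGenerated_of_evalRel {X Y : Q} {φ : X ⟶ Y} {w : List (Ltr B)}
    (hw : EvalRel π w φ) (hiso : ∀ l ∈ w, IsIso l.f) : IsoGenerated π φ := by
  induction hw with
  | nil h => exact .eqToHom h
  | cons f hw h ih =>
    exact .comp (ih fun l hl => hiso l (List.mem_cons_of_mem _ hl))
      (.comp (.img f (hiso ⟨_, _, f⟩ List.mem_cons_self)) (.eqToHom h))

lemma isIso_of_isoGenerated {X Y : Q} {φ : X ⟶ Y} (h : IsoGenerated π φ) : IsIso φ := by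
  induction h with
  | eqToHom h => infer_instance
  | img g hg => exact (by haveI := hg; infer_instance : IsIso (π.map g))
  | comp h1 h2 ih1 ih2 => exact (by haveI := ih1; haveI := ih2; infer_instance)

end CoeqIso

open CoeqIso in
/-- Let `Q = c.π` be the coequalizer in `Cat` of two functors defined on a discrete
category.  A morphism of the coequalizer category is an isomorphism if and only if it
lies in the smallest class of morphisms containing the `eqToHom`s and the images of the
isomorphisms of `B`, and closed under composition. -/
theorem isIso_iff_isoGenerated_coequalizer_of_discrete
    (A B : Cat.{u, u})
    (hA : ∀ (X Y : A) (f : X ⟶ Y), ∃ h : X = Y, f = eqToHom h)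
    (F G : A ⟶ B) (c : Cofork F G) (hc : IsColimit c)
    {X Y : c.pt} (φ : X ⟶ Y) :
    IsIso φ ↔ IsoGenerated (c.π.toFunctor : (B : Type u) ⥤ (c.pt : Type u)) φ := by
  classical
  constructor
  · intro hiso
    -- (1) object-surjectivity of c.π
    have hsurj : ∀ X' : (c.pt : Type u), ∃ a : (B : Type u), c.π.toFunctor.obj a = X' := by
      let P := fun X' : (c.pt : Type u) => ∃ a : (B : Type u), c.π.toFunctor.obj a = X'
      let k : B ⟶ Cat.of (ObjectProperty.FullSubcategory P) :=
        (ObjectProperty.lift P (c.π.toFunctor : (B : Type u) ⥤ (c.pt : Type u)) (fun a => ⟨a, rfl⟩)).toCatHom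
      have hk : F ≫ k = G ≫ k :=
        Cat.ext (discrete_funext hA fun a => fullsub_ext (Functor.congr_obj (congrArg Cat.Hom.toFunctor c.condition) a))
      have hid : Cofork.IsColimit.desc hc k hk ≫
          ((ObjectProperty.ι P).toCatHom : Cat.of (ObjectProperty.FullSubcategory P) ⟶ c.pt) = 𝟙 c.pt := by
        refine Cofork.IsColimit.hom_ext hc ?_
        rw [← Category.assoc, Cofork.IsColimit.π_desc' hc k hk]
        rfl
      intro X'
      obtain ⟨a, ha⟩ := ((Cofork.IsColimit.desc hc k hk).toFunctor.obj X').property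
      exact ⟨a, ha.trans (Functor.congr_obj (congrArg Cat.Hom.toFunctor hid) X')⟩
    -- (2) every morphism of c.pt is generated by images and eqToHoms
    have hgen : ∀ {X' Y' : (c.pt : Type u)} (φ' : X' ⟶ Y'),
        GenAll (c.π.toFunctor : (B : Type u) ⥤ (c.pt : Type u)) φ' := by
      intro X' Y' φ'
      let k : B ⟶ Cat.of (WObj (c.π.toFunctor : (B : Type u) ⥤ (c.pt : Type u))) :=
        (DW (c.π.toFunctor : (B : Type u) ⥤ (c.pt : Type u))).toCatHom
      have hk : F ≫ k = G ≫ k :=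
        Cat.ext (discrete_funext hA fun a => congrArg WObj.mk (Functor.congr_obj (congrArg Cat.Hom.toFunctor c.condition) a))
      have hid : Cofork.IsColimit.desc hc k hk ≫
          ((projW (c.π.toFunctor : (B : Type u) ⥤ (c.pt : Type u))).toCatHom :
            Cat.of (WObj (c.π.toFunctor : (B : Type u) ⥤ (c.pt : Type u))) ⟶ c.pt) = 𝟙 c.pt := by
        refine Cofork.IsColimit.hom_ext hc ?_
        rw [← Category.assoc, Cofork.IsColimit.π_desc' hc k hk]
        rfl
      have hid' := congrArg Cat.Hom.toFunctor hid
      have h2 : ((Cofork.IsColimit.desc hc k hk).toFunctor.map φ').val =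
          CategoryTheory.eqToHom (Functor.congr_obj hid' X') ≫ φ' ≫
          CategoryTheory.eqToHom (Functor.congr_obj hid' Y').symm := Functor.congr_hom hid' φ'
      have h3 : φ' = CategoryTheory.eqToHom (Functor.congr_obj hid' X').symm ≫
          ((Cofork.IsColimit.desc hc k hk).toFunctor.map φ').val ≫
          CategoryTheory.eqToHom (Functor.congr_obj hid' Y') := by
        rw [h2]
        erw [Category.assoc, Category.assoc, eqToHom_trans_assoc, eqToHom_refl, Category.id_comp, eqToHom_trans, eqToHom_refl,
          Category.comp_id]
      rw [h3]
      exact .comp (.eqToHom _) (.comp ((Cofork.IsColimit.desc hc k hk).toFunctor.map φ').2 (.eqToHom _))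
    -- (3) descend to the category of word actions
    let πf : (B : Type u) ⥤ (c.pt : Type u) := c.π.toFunctor
    let kR : B ⟶ Cat.of (RObj πf) := (DFunc πf).toCatHom
    have hkR : F ≫ kR = G ≫ kR :=
      Cat.ext (discrete_funext hA fun a => congrArg RObj.mk (Functor.congr_obj (congrArg Cat.Hom.toFunctor c.condition) a))
    let LR : (c.pt : Type u) ⥤ RObj πf := (Cofork.IsColimit.desc hc kR hkR).toFunctor
    have hLD : πf ⋙ LR = DFunc πf := congrArg Cat.Hom.toFunctor (Cofork.IsColimit.π_desc' hc kR hkR)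
    have hLobj : ∀ X' : (c.pt : Type u), LR.obj X' = ⟨X'⟩ := by
      intro X'
      obtain ⟨a, ha⟩ := hsurj X'
      subst ha
      exact Functor.congr_obj hLD a
    -- (4) reduced words for φ and inv φ
    obtain ⟨w, hw⟩ := evalRel_of_genAll πf (hgen φ)
    obtain ⟨v, hv⟩ := evalRel_of_genAll πf (hgen (inv φ))
    obtain ⟨ew, _, rw1, _⟩ := evalRel_red πf hw
    obtain ⟨ev, _, rv1, _⟩ := evalRel_red πf hv
    -- (5) the two fold equations
    have h12 : EvalRel πf (v.foldr rawPost [] ++ w.foldr rawPost []) (𝟙 X) :=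
      (ew.concat πf ev).cast πf (by simp)
    have h21 : EvalRel πf (w.foldr rawPost [] ++ v.foldr rawPost []) (𝟙 Y) :=
      (ev.concat πf ew).cast πf (by simp)
    have e12 : (v.foldr rawPost []).foldr rawPost (w.foldr rawPost []) = [] := by
      have hs := sigma_val πf hLD hLobj h12 (nilS πf X)
      rw [show (𝟙 X : X ⟶ X) = CategoryTheory.eqToHom rfl by simp] at hs
      rw [eqToHom_map LR, eqToHom_trans, eqToHom_trans, appR_eqToHom_val] at hs
      rw [List.foldr_append] at hs
      rw [show ((nilS πf X).val : List (Ltr (B : Type u))) = [] from rfl] at hs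
      rw [rawFold_eq_self rw1] at hs
      exact hs.symm
    have e21 : (w.foldr rawPost []).foldr rawPost (v.foldr rawPost []) = [] := by
      have hs := sigma_val πf hLD hLobj h21 (nilS πf Y)
      rw [show (𝟙 Y : Y ⟶ Y) = CategoryTheory.eqToHom rfl by simp] at hs
      rw [eqToHom_map LR, eqToHom_trans, eqToHom_trans, appR_eqToHom_val] at hs
      rw [List.foldr_append] at hs
      rw [show ((nilS πf Y).val : List (Ltr (B : Type u))) = [] from rfl] at hs
      rw [rawFold_eq_self rv1] at hs
      exact hs.symm
    -- (6) all letters are isomorphisms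
    have hlet : ∀ l ∈ w.foldr rawPost [], IsIso l.f := by
      intro l hl
      have c1 := cancel (v.foldr rawPost []) (w.foldr rawPost []) rv1 rw1 e12
      have c2 := cancel (w.foldr rawPost []) (v.foldr rawPost []) rw1 rv1 e21
      exact isIso_letter (c1.1 l hl) (c2.2 l hl)
    exact isoGenerated_of_evalRel πf ew hlet
  · intro hgen
    exact isIso_of_isoGenerated (c.π.toFunctor : (B : Type u) ⥤ (c.pt : Type u)) hgen
end

section
/- Let C be a small category. Let Q : C ⥤ Q_C be the coequalizer in Cat of the pair of functors d0, d1 : ∐_{σ} 1 ⇉ C, where the coproduct of copies of the terminal category 1 is indexed by the set of all isomorphisms σ of C, and d0 (respectively d1) sends the object of the σ-indexed copy of 1 to the domain (respectively codomain) of σ. Then the category Q_C is skeletal: every isomorphism of Q_C is an automorphism. -/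
open CategoryTheory Limits

universe u

/-- The set of isomorphisms of `C`, used to index a copower of the terminal category:
this coproduct of copies of the terminal category `1` is the discrete category on the
set of isomorphisms of `C`. -/
def IsoIndex (C : Type u) [Category.{u} C] : Type u := Σ X Y : C, X ≅ Y

/-- The functor `d0` sending the object of the copy of `1` indexed by an isomorphism
`σ` of `C` to the domain of `σ`. -/
def isoDom (C : Type u) [Category.{u} C] :
    Cat.of (Discrete (IsoIndex C)) ⟶ Cat.of C :=
  Functor.toCatHom (Discrete.functor fun σ : IsoIndex C => σ.1)

/-- The functor `d1` sending the object of the copy of `1` indexed by an isomorphism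
`σ` of `C` to the codomain of `σ`. -/
def isoCod (C : Type u) [Category.{u} C] :
    Cat.of (Discrete (IsoIndex C)) ⟶ Cat.of C :=
  Functor.toCatHom (Discrete.functor fun σ : IsoIndex C => σ.2.1)

/-- Any functor out of `C` identifying the domain and codomain of every isomorphism
coequalizes `isoDom` and `isoCod`. -/
lemma coequalizes_of_obj_eq {C : Type u} [Category.{u} C] {D : Type u} [Category.{u} D]
    (F : Cat.of C ⟶ Cat.of D) (h : ∀ σ : IsoIndex C, F.toFunctor.obj σ.1 = F.toFunctor.obj σ.2.1) :
    isoDom C ≫ F = isoCod C ≫ F := by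
  apply Cat.ext; rw [Cat.Hom.comp_toFunctor, Cat.Hom.comp_toFunctor]
  show (Discrete.functor (fun σ : IsoIndex C => σ.1) ⋙ F.toFunctor : Discrete (IsoIndex C) ⥤ D) =
    Discrete.functor (fun σ : IsoIndex C => σ.2.1) ⋙ F.toFunctor
  refine CategoryTheory.Functor.ext (fun X => h X.as) (fun X Y f => ?_)
  obtain rfl : X = Y := Discrete.ext f.down.down
  obtain rfl : f = 𝟙 X := Subsingleton.elim _ _
  rw [CategoryTheory.Functor.map_id, CategoryTheory.Functor.map_id]
  erw [Category.id_comp, eqToHom_trans, eqToHom_refl]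

/-- The projection of a colimit cofork of `isoDom, isoCod` is surjective on objects. -/
lemma pi_obj_surjective {C : Type u} [Category.{u} C]
    (c : Cofork (isoDom C) (isoCod C)) (hc : IsColimit c) :
    Function.Surjective (c.π.toFunctor.obj) := by
  intro x
  let P : c.pt → Prop := fun x => ∃ X : C, c.π.toFunctor.obj X = x
  let F : C ⥤ ObjectProperty.FullSubcategory P := ObjectProperty.lift P c.π.toFunctor fun X => ⟨X, rfl⟩
  have hππ : ∀ σ : IsoIndex C, c.π.toFunctor.obj σ.1 = c.π.toFunctor.obj σ.2.1 := fun σ =>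
    Functor.congr_obj (congrArg Cat.Hom.toFunctor c.condition) ⟨σ⟩
  have cond := coequalizes_of_obj_eq (show Cat.of C ⟶ Cat.of (ObjectProperty.FullSubcategory P) from F.toCatHom)
    (fun σ => by apply ObjectProperty.FullSubcategory.ext; exact hππ σ)
  let ψ : c.pt ⟶ Cat.of (ObjectProperty.FullSubcategory P) := Cofork.IsColimit.desc hc _ cond
  have hψ : c.π ≫ ψ = (show Cat.of C ⟶ Cat.of (ObjectProperty.FullSubcategory P) from F.toCatHom) :=
    Cofork.IsColimit.π_desc' hc _ cond
  have hsplit : ψ ≫ (show Cat.of (ObjectProperty.FullSubcategory P) ⟶ c.pt from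
      (ObjectProperty.ι P).toCatHom) = 𝟙 c.pt := by
    apply Cofork.IsColimit.hom_ext hc
    rw [← Category.assoc, hψ]
    rfl
  have := (ψ.toFunctor.obj x).2
  obtain ⟨X, hX⟩ := this
  refine ⟨X, ?_⟩
  have := Functor.congr_obj (congrArg Cat.Hom.toFunctor hsplit) x
  simp only [Cat.Hom.id_obj] at this
  rw [hX]
  exact this

/-- The coequalizer in `Cat` of the two functors `d0, d1 : ∐_σ 1 ⇉ C`, indexed by the
isomorphisms of `C` and picking out their domains and codomains, is a skeletal
category: any two isomorphic objects are equal, i.e. every isomorphism is an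
automorphism. -/
theorem skeletal_coequalizer_of_isoDom_isoCod (C : Type u) [Category.{u} C]
    (c : Cofork (isoDom C) (isoCod C)) (hc : IsColimit c) :
    Skeletal (c.pt : Type u) := by
  intro x y hxy
  obtain ⟨X, rfl⟩ := pi_obj_surjective c hc x
  obtain ⟨Y, rfl⟩ := pi_obj_surjective c hc y
  obtain ⟨u⟩ := hxy
  -- use the quotient functor to the skeleton of `C`
  let F : C ⥤ Skeleton C := toSkeletonFunctor C
  have cond := coequalizes_of_obj_eq (show Cat.of C ⟶ Cat.of (Skeleton C) from F.toCatHom)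
    (fun σ => skeleton_skeletal C ⟨F.mapIso σ.2.2⟩)
  let ψ : c.pt ⟶ Cat.of (Skeleton C) := Cofork.IsColimit.desc hc _ cond
  have hψ : c.π ≫ ψ = (show Cat.of C ⟶ Cat.of (Skeleton C) from F.toCatHom) :=
    Cofork.IsColimit.π_desc' hc _ cond
  have h1 : ψ.toFunctor.obj (c.π.toFunctor.obj X) = F.obj X := Functor.congr_obj (congrArg Cat.Hom.toFunctor hψ) X
  have h2 : ψ.toFunctor.obj (c.π.toFunctor.obj Y) = F.obj Y := Functor.congr_obj (congrArg Cat.Hom.toFunctor hψ) Y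
  have h3 : F.obj X = F.obj Y := by
    rw [← h1, ← h2]
    exact skeleton_skeletal C ⟨ψ.toFunctor.mapIso u⟩
  -- `F.obj X = ⟦X⟧`, so `X ≅ Y`, hence `c.π.obj X = c.π.obj Y`
  have h4 : Nonempty (X ≅ Y) := Quotient.exact h3
  obtain ⟨e⟩ := h4
  exact Functor.congr_obj (congrArg Cat.Hom.toFunctor c.condition) ⟨⟨X, Y, e⟩⟩
end

section
/- The full subcategory of Cat consisting of the skeletal small categories is reflective in Cat: the inclusion functor from the full subcategory of skeletal small categories into Cat has a left adjoint. -/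
open CategoryTheory

universe u

namespace SkelRefl

variable (C : Type u) [Category.{u} C]

/-- Vertices: iso classes of objects of `C`, as a fresh type. -/
structure Obj : Type u where
  q : Skeleton C

/-- Edges of the quiver on iso classes. -/
structure Edge (a b : Obj C) : Type u where
  X : C
  Y : C
  f : X ⟶ Y
  hX : Obj.mk (toSkeleton X) = a
  hY : Obj.mk (toSkeleton Y) = b

instance : Quiver.{u, u} (Obj C) := ⟨fun a b => Edge C a b⟩

variable {C}

/-- A morphism of `C` as an edge path. -/
def pedge {X Y : C} (f : X ⟶ Y) :
    (Paths.of (Obj C)).obj (Obj.mk (toSkeleton X)) ⟶ (Paths.of (Obj C)).obj (Obj.mk (toSkeleton Y)) :=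
  (Paths.of (Obj C)).map (⟨X, Y, f, rfl, rfl⟩ : Edge C _ _)

variable (C)

/-- The relations. -/
inductive PRel : HomRel (Paths (Obj C))
  | id (X : C) : PRel (pedge (𝟙 X)) (𝟙 ((Paths.of (Obj C)).obj (Obj.mk (toSkeleton X))))
  | comp {X Y Z : C} (f : X ⟶ Y) (g : Y ⟶ Z) : PRel (pedge f ≫ pedge g) (pedge (f ≫ g))

/-- The strict skeletal reflection. -/
def LC : Type u := CategoryTheory.Quotient (PRel C)

instance : Category.{u} (LC C) :=
  inferInstanceAs (Category (CategoryTheory.Quotient (PRel C)))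

/-- The unit functor. -/
def eta : C ⥤ LC C where
  obj X := (CategoryTheory.Quotient.functor (PRel C)).obj ((Paths.of (Obj C)).obj (Obj.mk (toSkeleton X)))
  map f := (CategoryTheory.Quotient.functor (PRel C)).map (pedge f)
  map_id X := by
    rw [CategoryTheory.Quotient.sound _ (PRel.id X)]
    exact (CategoryTheory.Quotient.functor (PRel C)).map_id _
  map_comp f g := by
    rw [← CategoryTheory.Quotient.sound _ (PRel.comp f g)]
    exact (CategoryTheory.Quotient.functor (PRel C)).map_comp _ _

variable {C}

section Lift

variable {D : Type u} [Category.{u} D] (hD : Skeletal D) (F : C ⥤ D)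

/-- Object part of the lift. -/
def liftObj : Obj C → D :=
  fun a => Quotient.lift F.obj (fun _ _ h => hD ⟨F.mapIso (Classical.choice h)⟩) a.q

lemma liftObj_toSkeleton (X : C) : liftObj hD F (Obj.mk (toSkeleton X)) = F.obj X := rfl

/-- Prefunctor part of the lift. -/
def liftPre : Prefunctor (Obj C) D where
  obj := liftObj hD F
  map {a b} e :=
    eqToHom (congrArg (liftObj hD F) e.hX.symm) ≫ F.map e.f ≫
      eqToHom (congrArg (liftObj hD F) e.hY)

/-- The lift of `F` to the reflection. -/
def liftF : LC C ⥤ D :=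
  CategoryTheory.Quotient.lift (PRel C) (Paths.lift (liftPre hD F)) (by
    rintro _ _ _ _ (⟨X⟩ | ⟨f, g⟩)
    · show (Paths.lift (liftPre hD F)).map (Quiver.Hom.toPath _)
          = (Paths.lift (liftPre hD F)).map (𝟙 _)
      erw [Paths.lift_toPath]
      have : (liftPre hD F).map
          (⟨X, X, 𝟙 X, rfl, rfl⟩ :
            Edge C (Obj.mk (toSkeleton X)) (Obj.mk (toSkeleton X))) = 𝟙 (F.obj X) := by
        simp [liftPre]
        exact Category.id_comp _
      exact this
    · show (Paths.lift (liftPre hD F)).map (Quiver.Hom.toPath _ ≫ Quiver.Hom.toPath _)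
        = (Paths.lift (liftPre hD F)).map (Quiver.Hom.toPath _)
      rw [Functor.map_comp]; erw [Paths.lift_toPath, Paths.lift_toPath, Paths.lift_toPath]
      have hmap : ∀ {X Y : C} (f : X ⟶ Y), (liftPre hD F).map
          (⟨X, Y, f, rfl, rfl⟩ : Edge C (Obj.mk (toSkeleton X)) (Obj.mk (toSkeleton Y))) = F.map f :=
        fun f => (Category.id_comp _).trans (Category.comp_id _)
      erw [hmap, hmap, hmap]
      exact (F.map_comp f g).symm)

lemma eta_liftF : eta C ⋙ liftF hD F = F := by
  fapply CategoryTheory.Functor.ext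
  · intro X; rfl
  · intro X Y f
    show (liftF hD F).map ((CategoryTheory.Quotient.functor (PRel C)).map (pedge f)) = _
    rw [show (liftF hD F).map ((CategoryTheory.Quotient.functor (PRel C)).map (pedge f))
        = (Paths.lift (liftPre hD F)).map (pedge f) from rfl]
    erw [show pedge f = Quiver.Hom.toPath (⟨X, Y, f, rfl, rfl⟩ : Edge C _ _) from rfl,
      Paths.lift_toPath]
    simp [liftPre]
    rfl

end Lift

lemma LC_skeletal : Skeletal (LC C) := by
  intro A B h
  obtain ⟨i⟩ := h
  set T := liftF (skeleton_skeletal C) (toSkeletonFunctor C) with hTdef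
  have hT : ∀ a : Obj C,
      T.obj ((CategoryTheory.Quotient.functor (PRel C)).obj ((Paths.of (Obj C)).obj a)) = a.q := by
    rintro ⟨q⟩
    induction q using Quotient.ind with
    | _ X => rfl
  obtain ⟨⟨qa⟩⟩ := A
  obtain ⟨⟨qb⟩⟩ := B
  have : qa = qb := by
    exact skeleton_skeletal C
      ⟨eqToIso (hT ⟨qa⟩).symm ≪≫ T.mapIso i ≪≫ eqToIso (hT ⟨qb⟩)⟩
  subst this
  rfl

/-- Uniqueness of the lift. -/
lemma liftF_unique {D : Type u} [Category.{u} D] (G G' : LC C ⥤ D)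
    (h : eta C ⋙ G = eta C ⋙ G') : G = G' := by
  apply CategoryTheory.Quotient.lift_unique' (PRel C)
  have hobj : (CategoryTheory.Quotient.functor (PRel C) ⋙ G).obj
      = (CategoryTheory.Quotient.functor (PRel C) ⋙ G').obj := by
    funext a
    obtain ⟨q⟩ := a
    have hq : q = toSkeleton (Quotient.out q) := (Quotient.out_eq q).symm
    rw [hq]
    exact congrArg (fun (H : C ⥤ D) => H.obj (Quotient.out q)) h
  refine Paths.ext_functor hobj ?_
  intro a b e
  obtain ⟨X, Y, f, hX, hY⟩ := e
  subst hX; subst hY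
  have h1 : ∀ X : C, G.obj ((eta C).obj X) = G'.obj ((eta C).obj X) :=
    fun X => congrArg (fun (H : C ⥤ D) => H.obj X) h
  have h2 : G.map ((eta C).map f)
      = eqToHom (h1 X) ≫ G'.map ((eta C).map f) ≫ eqToHom (h1 Y).symm := by
    have := Functor.congr_hom h f
    simpa using this
  exact h2

end SkelRefl

open SkelRefl in
instance (A : Cat.{u, u}) :
    Limits.HasInitial (StructuredArrow A
      (ObjectProperty.ι (fun C : Cat.{u, u} => Skeletal (C : Type u)))) := by
  haveI : ∀ S, Unique
      ((StructuredArrow.mk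
        (show A ⟶ (ObjectProperty.ι (fun C : Cat.{u, u} =>
            Skeletal (C : Type u))).obj ⟨Cat.of (LC ↑A), LC_skeletal⟩ from (eta ↑A).toCatHom) ⟶ S)) := by
    intro S
    refine ⟨⟨StructuredArrow.homMk (ObjectProperty.homMk (liftF S.right.property S.hom.toFunctor).toCatHom) ?_⟩, ?_⟩
    · exact Cat.ext (eta_liftF S.right.property S.hom.toFunctor)
    · intro g
      ext
      apply SkelRefl.liftF_unique
      have hw : eta ↑A ⋙ g.right.hom.toFunctor = S.hom.toFunctor := congrArg Cat.Hom.toFunctor g.w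
      rw [hw]
      exact (eta_liftF S.right.property S.hom.toFunctor).symm
  exact Limits.hasInitial_of_unique
    (StructuredArrow.mk
      (show A ⟶ (ObjectProperty.ι (fun C : Cat.{u, u} =>
          Skeletal (C : Type u))).obj ⟨Cat.of (LC ↑A), LC_skeletal⟩ from (eta ↑A).toCatHom))

open SkelRefl in
/-- The full subcategory of `Cat` consisting of the skeletal small categories is
reflective in `Cat`: the inclusion functor has a left adjoint. -/
theorem skeletal_reflective :
    (ObjectProperty.ι
      (fun C : Cat.{u, u} => Skeletal (C : Type u))).IsRightAdjoint := by
  exact isRightAdjointOfStructuredArrowInitials _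
end

section
/- Let F : A ⥤ B be a functor between small categories. Let K be the (non-full, wide) subcategory of A whose objects are all objects of A and whose morphisms X ⟶ Y are those morphisms f : X ⟶ Y of A such that F(X) = F(Y) and F(f) is an isomorphism (so that F(f) is an automorphism of B), and let k : K ⥤ A be the inclusion functor. Then F ∘ k is trivial, and for every small category X and every functor G : X ⥤ A such that F ∘ G is trivial, there exists a unique functor G' : X ⥤ K with k ∘ G' = G. (That is, k is the Z-kernel of F with respect to the ideal of trivial functors; equivalently, K is the pullback in Cat of the inclusion Aut(B) ⥤ B along F.) -/
open CategoryTheory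

universe u

/-- A functor is trivial if it maps every morphism to an automorphism: the images of
domain and codomain are equal and the image of the morphism is an isomorphism. -/
def IsTrivialFunctor {X : Type*} {Y : Type*} [Category X] [Category Y] (F : X ⥤ Y) :
    Prop :=
  ∀ (a b : X) (f : a ⟶ b), F.obj a = F.obj b ∧ IsIso (F.map f)

/-- The wide (non-full) subcategory of `A` whose morphisms are those morphisms `f`
of `A` that are sent by `F` to an automorphism of `B`. -/
def ZKernelCat {A B : Type u} [Category.{u} A] [Category.{u} B] (F : A ⥤ B) : Type u := A

instance ZKernelCat.category {A B : Type u} [Category.{u} A] [Category.{u} B]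
    (F : A ⥤ B) : Category.{u} (ZKernelCat F) where
  Hom X Y := {f : (show A from X) ⟶ (show A from Y) // F.obj X = F.obj Y ∧ IsIso (F.map f)}
  id X := ⟨𝟙 _, rfl, by rw [F.map_id]; infer_instance⟩
  comp f g := ⟨f.1 ≫ g.1, f.2.1.trans g.2.1, by
    rw [F.map_comp]
    have := f.2.2
    have := g.2.2
    infer_instance⟩
  id_comp f := Subtype.ext (Category.id_comp f.1)
  comp_id f := Subtype.ext (Category.comp_id f.1)
  assoc f g h := Subtype.ext (Category.assoc f.1 g.1 h.1)

/-- The inclusion functor of the `Z`-kernel subcategory into `A`. -/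
def zKernelIncl {A B : Type u} [Category.{u} A] [Category.{u} B] (F : A ⥤ B) :
    ZKernelCat F ⥤ A where
  obj X := X
  map f := f.1

/-- The inclusion `k` of the wide subcategory `K` of `A`, whose morphisms are the
morphisms of `A` sent by `F` to automorphisms of `B`, is the `Z`-kernel of `F` with
respect to the ideal of trivial functors: `F ∘ k` is trivial, and every functor `G`
such that `F ∘ G` is trivial factors uniquely through `k`. -/
theorem zKernelIncl_is_zKernel {A B : Type u} [Category.{u} A] [Category.{u} B]
    (F : A ⥤ B) :
    IsTrivialFunctor (zKernelIncl F ⋙ F) ∧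
      ∀ (X : Type u) [Category.{u} X] (G : X ⥤ A), IsTrivialFunctor (G ⋙ F) →
        ∃! G' : X ⥤ ZKernelCat F, G' ⋙ zKernelIncl F = G := by
  constructor
  · intro a b f
    exact f.2
  · intro X _ G hG
    refine ⟨⟨fun x => G.obj x, fun {x y} f => ⟨G.map f, hG x y f⟩, ?_, ?_⟩, ?_, ?_⟩
    · intro x; exact Subtype.ext (G.map_id x)
    · intro x y z f g; exact Subtype.ext (G.map_comp f g)
    · apply CategoryTheory.Functor.ext
      · intro x y f; simp [zKernelIncl]; exact (Category.id_comp _).symm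
      · intro x; exact rfl
    · intro G' hG'
      subst hG'
      apply CategoryTheory.Functor.ext
      · intro x y f
        refine Subtype.ext ?_
        simp [zKernelIncl]; exact congrArg Subtype.val (Category.id_comp _).symm
      · intro x; rfl
end

section
/- For every small category A there exist a small skeletal groupoid S and a functor s : A ⥤ S such that s maps every morphism of A to an automorphism of S, and for every small category X and every trivial functor G : A ⥤ X (i.e., G maps every morphism of A to an automorphism of X), there exists a unique functor L : S ⥤ X with L ∘ s = G. (That is, the identity functor of A admits a Z-cokernel with respect to the ideal of trivial functors, and this Z-cokernel is the reflection of A into skeletal groupoids.) -/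
open CategoryTheory

universe u

namespace ZCokAux

variable (A : Type u) [Category.{u} A]

/-- The type of all arrows of `A`. -/
def Gen : Type u := Σ (a : A) (b : A), a ⟶ b

/-- Relations: identities become trivial, composition becomes multiplication (in
`End`-convention order: `f ≫ g` corresponds to `g * f`). -/
def rels : Set (FreeGroup (Gen A)) :=
  { x | (∃ a : A, x = FreeGroup.of ⟨a, a, 𝟙 a⟩) ∨
    ∃ (a b c : A) (f : a ⟶ b) (g : b ⟶ c),
      x = FreeGroup.of ⟨b, c, g⟩ * FreeGroup.of ⟨a, b, f⟩ *
        (FreeGroup.of ⟨a, c, f ≫ g⟩)⁻¹ }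

/-- The universal group generated by all arrows of `A` subject to functoriality
relations. -/
def U : Type u := PresentedGroup (rels A)

instance : Group (U A) := by unfold U; infer_instance

/-- The generator corresponding to an arrow. -/
def gen (p : Gen A) : U A := PresentedGroup.of p

lemma mk_eq_one {x : FreeGroup (Gen A)} (hx : x ∈ rels A) :
    PresentedGroup.mk (rels A) x = 1 :=
  (QuotientGroup.eq_one_iff x).2 (Subgroup.subset_normalClosure hx)

lemma gen_id (a : A) : gen A ⟨a, a, 𝟙 a⟩ = 1 :=
  mk_eq_one A (Or.inl ⟨a, rfl⟩)

lemma gen_comp {a b c : A} (f : a ⟶ b) (g : b ⟶ c) :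
    gen A ⟨a, c, f ≫ g⟩ = gen A ⟨b, c, g⟩ * gen A ⟨a, b, f⟩ := by
  have h := mk_eq_one A (show _ ∈ rels A from Or.inr ⟨a, b, c, f, g, rfl⟩)
  rw [map_mul, map_mul, map_inv, mul_inv_eq_one] at h
  exact h.symm

/-- Zigzag relation on objects. -/
def rel : A → A → Prop := fun a b => Nonempty (a ⟶ b)

/-- Connected components of `A`. -/
def T : Type u := Quot (rel A)

/-- The subgroup of `U A` generated by arrows lying in a fixed component. -/
def H (c : T A) : Subgroup (U A) :=
  Subgroup.closure { u | ∃ p : Gen A, Quot.mk (rel A) p.1 = c ∧ u = gen A p }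

lemma mem_H_congr {c d : T A} (h : c = d) {u : U A} (hu : u ∈ H A c) :
    u ∈ H A d := h ▸ hu

instance : Category.{u} (T A) where
  Hom c d := { u : U A // u ∈ H A c ∧ c = d }
  id c := ⟨1, one_mem _, rfl⟩
  comp := fun {c d e} m n =>
    ⟨n.1 * m.1, mul_mem (mem_H_congr A m.2.2.symm n.2.1) m.2.1, m.2.2.trans n.2.2⟩
  id_comp := fun m => Subtype.ext (by simp)
  comp_id := fun m => Subtype.ext (by simp)
  assoc := fun m n o => Subtype.ext (mul_assoc _ _ _).symm

@[simp] lemma comp_val {c d e : T A} (m : c ⟶ d) (n : d ⟶ e) :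
    (m ≫ n).1 = n.1 * m.1 := rfl

@[simp] lemma id_val (c : T A) : (𝟙 c : c ⟶ c).1 = 1 := rfl

instance : Groupoid.{u} (T A) where
  inv := fun {c d} m => ⟨m.1⁻¹, mem_H_congr A m.2.2 (inv_mem m.2.1), m.2.2.symm⟩
  inv_comp := fun m => Subtype.ext (by simp)
  comp_inv := fun m => Subtype.ext (by simp)

lemma eqToHom_val {c d : T A} (h : c = d) :
    (eqToHom h : c ⟶ d).1 = 1 := by cases h; rfl

lemma skeletal_T : Skeletal (T A) := fun c d h => h.some.hom.2.2

lemma isIso_T {c d : T A} (f : c ⟶ d) : IsIso f :=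
  ⟨Groupoid.inv f, Groupoid.comp_inv f, Groupoid.inv_comp f⟩

/-- The canonical trivial functor. -/
def sF : A ⥤ T A where
  obj a := Quot.mk (rel A) a
  map {a b} f :=
    ⟨gen A ⟨a, b, f⟩, Subgroup.subset_closure ⟨⟨a, b, f⟩, rfl, rfl⟩, Quot.sound ⟨f⟩⟩
  map_id a := Subtype.ext (gen_id A a)
  map_comp {a b c} f g := Subtype.ext (gen_comp A f g)

section Universal

open scoped Classical

variable {A}
variable {X : Type u} [Category.{u} X] (G : A ⥤ X) (hG : IsTrivialFunctor G)

@[simp] lemma aut_one_hom (Y : X) : (1 : Aut Y).hom = 𝟙 Y := rfl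

/-- Value of the factorization on components. -/
def gObj : T A → X :=
  Quot.lift G.obj (fun a b r => r.elim fun f => (hG a b f).1)

/-- The automorphism associated to an arrow. -/
noncomputable def autOf (p : Gen A) : Aut (G.obj p.1) :=
  @asIso _ _ _ _ (G.map p.2.2) (hG _ _ _).2 ≪≫ eqToIso (hG p.1 p.2.1 p.2.2).1.symm

/-- The candidate images of the generators. -/
noncomputable def phi0 (p : Gen A) : ∀ c : T A, Aut (gObj G hG c) := fun c =>
  if h : Quot.mk (rel A) p.1 = c then
    eqToIso (by rw [← h]; rfl) ≪≫ autOf G hG p ≪≫ eqToIso (by rw [← h]; rfl)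
  else 1

lemma phi0_rels : ∀ r ∈ rels A, FreeGroup.lift (phi0 G hG) r = 1 := by
  rintro r (⟨a, rfl⟩ | ⟨a, b, c, f, g, rfl⟩)
  · erw [FreeGroup.lift_apply_of]
    funext t
    by_cases h : Quot.mk (rel A) a = t
    · apply Iso.ext
      erw [phi0, dif_pos h]
      simp [phi0, dif_pos h, autOf, aut_one_hom]
    · erw [phi0, dif_neg h]
      simp [phi0, dif_neg h]
  · simp only [map_mul, map_inv]
    erw [FreeGroup.lift_apply_of, FreeGroup.lift_apply_of, FreeGroup.lift_apply_of]
    rw [mul_inv_eq_one]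
    funext t
    have hab : Quot.mk (rel A) a = Quot.mk (rel A) b := Quot.sound ⟨f⟩
    by_cases h : Quot.mk (rel A) a = t
    · apply Iso.ext
      erw [Pi.mul_apply, Aut.Aut_mul_def, phi0, phi0, phi0, dif_pos h, dif_pos (hab ▸ h), dif_pos h]
      simp [Pi.mul_apply, Aut.Aut_mul_def, phi0, dif_pos h, dif_pos (hab ▸ h), autOf]
    · erw [Pi.mul_apply, phi0, phi0, phi0, dif_neg h, dif_neg (fun hb => h (hab.trans hb)), dif_neg h]
      simp [Pi.mul_apply, phi0, dif_neg h, dif_neg (fun hb => h (hab.trans hb)), dif_neg h]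

/-- The induced group homomorphism. -/
noncomputable def phi : U A →* (∀ c : T A, Aut (gObj G hG c)) :=
  PresentedGroup.toGroup (phi0_rels G hG)

/-- The factorizing functor. -/
noncomputable def LF : T A ⥤ X where
  obj := gObj G hG
  map {c d} m := (phi G hG m.1 c).hom ≫ eqToHom (congrArg (gObj G hG) m.2.2)
  map_id c := by simp
  map_comp {c d e} m n := by
    obtain ⟨u, hu, hcd⟩ := m
    obtain ⟨v, hv, hde⟩ := n
    subst hcd; subst hde
    simp [Aut.Aut_mul_def]
    rfl

lemma phi_gen (p : Gen A) : phi G hG (gen A p) = phi0 G hG p :=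
  PresentedGroup.toGroup.of (phi0_rels G hG)

lemma sF_comp_LF : sF A ⋙ LF G hG = G := by
  refine CategoryTheory.Functor.ext (fun a => rfl) ?_
  intro a b f
  simp only [Functor.comp_map, LF, sF]
  erw [phi_gen]
  simp only [phi_gen, phi0, dif_pos rfl, autOf]
  simp [eqToHom_trans]


lemma LF_unique (L' : T A ⥤ X) (hL' : sF A ⋙ L' = G) : L' = LF G hG := by
  have hobj : ∀ c : T A, L'.obj c = (LF G hG).obj c := by
    refine Quot.ind (fun a => ?_)
    exact Functor.congr_obj hL' a
  refine CategoryTheory.Functor.ext hobj ?_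
  rintro c d ⟨u, hu, hcd⟩
  subst hcd
  have key : ∀ (u : U A) (hu' : u ∈ H A c),
      L'.map (⟨u, hu', rfl⟩ : c ⟶ c) =
        eqToHom (hobj c) ≫ (LF G hG).map (⟨u, hu', rfl⟩ : c ⟶ c) ≫
          eqToHom (hobj c).symm := by
    intro u hu'
    induction hu' using Subgroup.closure_induction with
    | mem v hv =>
        obtain ⟨⟨a, b, f⟩, hp, rfl⟩ := hv
        subst hp
        have hb : (sF A).obj b = (sF A).obj a := (Quot.sound ⟨f⟩).symm
        show L'.map (⟨gen A ⟨a, b, f⟩,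
            Subgroup.subset_closure ⟨⟨a, b, f⟩, rfl, rfl⟩, rfl⟩ :
              (sF A).obj a ⟶ (sF A).obj a) =
          eqToHom _ ≫ (LF G hG).map (⟨gen A ⟨a, b, f⟩,
            Subgroup.subset_closure ⟨⟨a, b, f⟩, rfl, rfl⟩, rfl⟩ :
              (sF A).obj a ⟶ (sF A).obj a) ≫ eqToHom _
        have hm : (sF A).map f ≫ eqToHom hb =
            (⟨gen A ⟨a, b, f⟩,
              Subgroup.subset_closure ⟨⟨a, b, f⟩, rfl, rfl⟩, rfl⟩ :
                (sF A).obj a ⟶ (sF A).obj a) :=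
          Subtype.ext (by rw [comp_val, eqToHom_val, one_mul]; rfl)
        rw [← hm, CategoryTheory.Functor.map_comp, CategoryTheory.Functor.map_comp, eqToHom_map L',
          eqToHom_map (LF G hG)]
        have hc1 := Functor.congr_hom hL' f
        rw [CategoryTheory.Functor.comp_map] at hc1
        have hc2 := Functor.congr_hom (sF_comp_LF G hG) f
        rw [CategoryTheory.Functor.comp_map] at hc2
        rw [hc1, hc2]
        simp only [Category.assoc]
        erw [eqToHom_trans, eqToHom_trans_assoc, eqToHom_trans]
        simp [eqToHom_trans]
    | one =>
        show L'.map (𝟙 c) = eqToHom _ ≫ (LF G hG).map (𝟙 c) ≫ eqToHom _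
        rw [CategoryTheory.Functor.map_id, CategoryTheory.Functor.map_id]
        simp
    | mul x y hx hy ihx ihy =>
        have hsplit :=
          letI m : c ⟶ c := ⟨y, hy, rfl⟩
          letI n : c ⟶ c := ⟨x, hx, rfl⟩
          (Subtype.ext rfl :
            (⟨x * y, mul_mem hx hy, rfl⟩ : c ⟶ c) = m ≫ n)
        show L'.map (⟨x * y, mul_mem hx hy, rfl⟩ : c ⟶ c) =
          eqToHom _ ≫ (LF G hG).map (⟨x * y, mul_mem hx hy, rfl⟩ : c ⟶ c) ≫
            eqToHom _
        rw [hsplit, CategoryTheory.Functor.map_comp, CategoryTheory.Functor.map_comp, ihx, ihy]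
        simp [eqToHom_trans]
    | inv x hx ih =>
        have hn : (⟨x, hx, rfl⟩ : c ⟶ c) ≫ (⟨x⁻¹, inv_mem hx, rfl⟩ : c ⟶ c)
            = 𝟙 c := Subtype.ext (by simp)
        have hm : (⟨x⁻¹, inv_mem hx, rfl⟩ : c ⟶ c) ≫ (⟨x, hx, rfl⟩ : c ⟶ c)
            = 𝟙 c := Subtype.ext (by simp)
        show L'.map (⟨x⁻¹, inv_mem hx, rfl⟩ : c ⟶ c) =
          eqToHom _ ≫ (LF G hG).map (⟨x⁻¹, inv_mem hx, rfl⟩ : c ⟶ c) ≫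
            eqToHom _
        have h1 : L'.map (⟨x, hx, rfl⟩ : c ⟶ c) ≫
            L'.map (⟨x⁻¹, inv_mem hx, rfl⟩ : c ⟶ c) = 𝟙 _ := by
          rw [← CategoryTheory.Functor.map_comp, hn, CategoryTheory.Functor.map_id]
        have h2 : L'.map (⟨x⁻¹, inv_mem hx, rfl⟩ : c ⟶ c) ≫
            L'.map (⟨x, hx, rfl⟩ : c ⟶ c) = 𝟙 _ := by
          rw [← CategoryTheory.Functor.map_comp, hm, CategoryTheory.Functor.map_id]
        have h3 : (LF G hG).map (⟨x, hx, rfl⟩ : c ⟶ c) ≫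
            (LF G hG).map (⟨x⁻¹, inv_mem hx, rfl⟩ : c ⟶ c) = 𝟙 _ := by
          rw [← CategoryTheory.Functor.map_comp, hn, CategoryTheory.Functor.map_id]
        have h4 : (LF G hG).map (⟨x⁻¹, inv_mem hx, rfl⟩ : c ⟶ c) ≫
            (LF G hG).map (⟨x, hx, rfl⟩ : c ⟶ c) = 𝟙 _ := by
          rw [← CategoryTheory.Functor.map_comp, hm, CategoryTheory.Functor.map_id]
        haveI : IsIso (L'.map (⟨x, hx, rfl⟩ : c ⟶ c)) :=
          ⟨L'.map (⟨x⁻¹, inv_mem hx, rfl⟩ : c ⟶ c), h1, h2⟩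
        have e1 : L'.map (⟨x⁻¹, inv_mem hx, rfl⟩ : c ⟶ c) =
            inv (L'.map (⟨x, hx, rfl⟩ : c ⟶ c)) :=
          IsIso.eq_inv_of_hom_inv_id h1
        have h5 : (LF G hG).map (⟨x, hx, rfl⟩ : c ⟶ c) ≫
            ((LF G hG).map (⟨x⁻¹, inv_mem hx, rfl⟩ : c ⟶ c) ≫
              eqToHom (hobj c).symm) = eqToHom (hobj c).symm := by
          rw [← Category.assoc, h3, Category.id_comp]
        have e3 : L'.map (⟨x, hx, rfl⟩ : c ⟶ c) ≫
            (eqToHom (hobj c) ≫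
              (LF G hG).map (⟨x⁻¹, inv_mem hx, rfl⟩ : c ⟶ c) ≫
                eqToHom (hobj c).symm) = 𝟙 _ := by
          rw [ih]
          simp only [Category.assoc, eqToHom_trans_assoc, eqToHom_refl,
            Category.id_comp]
          rw [h5, eqToHom_trans, eqToHom_refl]
        rw [e1]
        exact (IsIso.eq_inv_of_hom_inv_id e3).symm
  exact key u hu

end Universal

end ZCokAux

open ZCokAux in
/-- For every small category `A` there is a small skeletal groupoid `S` together with a
trivial functor `s : A ⥤ S` such that every trivial functor out of `A` factors uniquely
through `s`: the identity functor of `A` admits a `Z`-cokernel with respect to the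
ideal of trivial functors, and this `Z`-cokernel is the reflection of `A` into skeletal
groupoids. -/
theorem exists_zCokernel_of_id (A : Type u) [Category.{u} A] :
    ∃ (S : Cat.{u, u}) (s : A ⥤ S),
      (∀ (X Y : (S : Type u)) (f : X ⟶ Y), IsIso f) ∧ Skeletal (S : Type u) ∧
        IsTrivialFunctor s ∧
        ∀ (X : Cat.{u, u}) (G : A ⥤ X), IsTrivialFunctor G →
          ∃! L : (S : Type u) ⥤ X, s ⋙ L = G := by
  refine ⟨Cat.of (T A), sF A, ?_, skeletal_T A, ?_, ?_⟩
  · intro X Y f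
    exact isIso_T A f
  · intro a b f
    exact ⟨Quot.sound ⟨f⟩, isIso_T A _⟩
  · intro X G hG
    exact ⟨LF G hG, sF_comp_LF G hG, fun L' hL' => LF_unique G hG L' hL'⟩
end

section
/- Let F : A ⥤ B be a functor between small categories. Then F admits a Z-cokernel with respect to the ideal of trivial functors: there exist a small category C and a functor U : B ⥤ C such that U ∘ F is trivial, and for every small category Y and every functor W : B ⥤ Y with W ∘ F trivial, there exists a unique functor L : C ⥤ Y with L ∘ U = W. -/
open CategoryTheory

universe u

namespace ZCok

variable {A B : Type u} [Category.{u} A] [Category.{u} B] (F : A ⥤ B)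

/-- relation on objects of `B` identifying endpoints of `F`-images. -/
def objRel : B → B → Prop :=
  fun x y => ∃ (a b : A) (f : a ⟶ b), F.obj a = x ∧ F.obj b = y

/-- objects of the cokernel. -/
abbrev CObj := Quot (objRel F)

/-- edges: morphisms of `B`, plus formal inverses of images of `F`. -/
inductive Edge : CObj F → CObj F → Type u
  | of : ∀ {x y : B} (f : x ⟶ y), Edge (Quot.mk _ x) (Quot.mk _ y)
  | inv : ∀ {a b : A} (f : a ⟶ b), Edge (Quot.mk _ (F.obj b)) (Quot.mk _ (F.obj a))

instance : Quiver (CObj F) := ⟨Edge F⟩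

/-- relations on the path category. -/
inductive pathRel : HomRel (Paths (CObj F))
  | relId (x : B) :
      pathRel ((Paths.of _).map (Edge.of (𝟙 x))) (𝟙 ((Paths.of _).obj (Quot.mk _ x)))
  | relComp {x y z : B} (f : x ⟶ y) (g : y ⟶ z) :
      pathRel ((Paths.of _).map (Edge.of f) ≫ (Paths.of _).map (Edge.of g))
        ((Paths.of _).map (Edge.of (f ≫ g)))
  | relInv₁ {a b : A} (f : a ⟶ b) :
      pathRel ((Paths.of _).map (Edge.of (F.map f)) ≫ (Paths.of _).map (Edge.inv f))
        (𝟙 ((Paths.of _).obj (Quot.mk _ (F.obj a))))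
  | relInv₂ {a b : A} (f : a ⟶ b) :
      pathRel ((Paths.of _).map (Edge.inv f) ≫ (Paths.of _).map (Edge.of (F.map f)))
        (𝟙 ((Paths.of _).obj (Quot.mk _ (F.obj b))))

/-- the cokernel category. -/
abbrev C := CategoryTheory.Quotient (pathRel F)

/-- the projection functor. -/
def U : B ⥤ C F where
  obj x := (Quotient.functor (pathRel F)).obj ((Paths.of _).obj (Quot.mk _ x))
  map f := (Quotient.functor (pathRel F)).map ((Paths.of _).map (Edge.of f))
  map_id x := by
    rw [CategoryTheory.Quotient.sound (pathRel F) (pathRel.relId x)]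
    exact (Quotient.functor (pathRel F)).map_id _
  map_comp f g := by
    rw [← (Quotient.functor (pathRel F)).map_comp,
      CategoryTheory.Quotient.sound (pathRel F) (pathRel.relComp f g)]

theorem U_hom_inv {a b : A} (f : a ⟶ b) :
    (U F).map (F.map f) ≫
      (Quotient.functor (pathRel F)).map ((Paths.of _).map (Edge.inv f)) = 𝟙 _ := by
  show (Quotient.functor (pathRel F)).map ((Paths.of _).map (Edge.of (F.map f))) ≫ _ = _
  rw [← Functor.map_comp, CategoryTheory.Quotient.sound (pathRel F) (pathRel.relInv₁ f)]
  exact (Quotient.functor (pathRel F)).map_id _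

theorem U_inv_hom {a b : A} (f : a ⟶ b) :
    (Quotient.functor (pathRel F)).map ((Paths.of _).map (Edge.inv f)) ≫
      (U F).map (F.map f) = 𝟙 _ := by
  show _ ≫ (Quotient.functor (pathRel F)).map ((Paths.of _).map (Edge.of (F.map f))) = _
  rw [← Functor.map_comp, CategoryTheory.Quotient.sound (pathRel F) (pathRel.relInv₂ f)]
  exact (Quotient.functor (pathRel F)).map_id _

variable {F} {Y : Type u} [Category.{u} Y] (W : B ⥤ Y) (hW : IsTrivialFunctor (F ⋙ W))

/-- the lift on the generating quiver. -/
noncomputable def liftPrefunctor : Prefunctor (CObj F) Y where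
  obj := Quot.lift W.obj (by
    rintro x y ⟨a, b, f, rfl, rfl⟩
    exact (hW a b f).1)
  map e :=
    match e with
    | .of f => W.map f
    | .inv (a := a) (b := b) f => @CategoryTheory.inv _ _ _ _ ((F ⋙ W).map f) (hW a b f).2

/-- the lift on path categories. -/
noncomputable def liftPaths : Paths (CObj F) ⥤ Y := Paths.lift (liftPrefunctor W hW)

theorem liftPaths_rel {p q : Paths (CObj F)} (f g : p ⟶ q)
    (h : @pathRel A B _ _ F p q f g) :
    (liftPaths W hW).map f = (liftPaths W hW).map g := by
  induction h with
  | relId x =>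
    simp only [liftPaths]; erw [Paths.lift_toPath]; exact W.map_id x
  | relComp f g =>
    simp only [liftPaths, Functor.map_comp]; erw [Paths.lift_toPath, Paths.lift_toPath, Paths.lift_toPath]; exact (W.map_comp f g).symm
  | @relInv₁ a b f =>
    have := (hW a b f).2
    rw [Functor.map_comp, CategoryTheory.Functor.map_id]
    simp only [liftPaths, Paths.of_map, Paths.lift_toPath]
    erw [Paths.lift_toPath, Paths.lift_toPath]
    exact IsIso.hom_inv_id ((F ⋙ W).map f)
  | @relInv₂ a b f =>
    have := (hW a b f).2
    rw [Functor.map_comp, CategoryTheory.Functor.map_id]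
    simp only [liftPaths, Paths.of_map, Paths.lift_toPath]
    erw [Paths.lift_toPath, Paths.lift_toPath]
    exact IsIso.inv_hom_id ((F ⋙ W).map f)

/-- the lift out of the cokernel. -/
noncomputable def liftC : C F ⥤ Y :=
  CategoryTheory.Quotient.lift (pathRel F) (liftPaths W hW)
    (fun _ _ f g h => liftPaths_rel W hW f g h)

theorem U_comp_liftC : U F ⋙ liftC W hW = W := by
  refine CategoryTheory.Functor.ext (fun x => rfl) ?_
  intro x y f
  erw [eqToHom_refl, eqToHom_refl, Category.comp_id, Category.id_comp]
  show (liftC W hW).map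
      ((Quotient.functor (pathRel F)).map ((Paths.of _).map (Edge.of f))) = W.map f
  simp only [liftC]
  rw [CategoryTheory.Quotient.lift_map_functor_map]
  simp only [liftPaths]; erw [Paths.lift_toPath]; rfl

/-- inverses are mapped compatibly by any two functors agreeing on a morphism. -/
theorem invDet {C' : Type*} {Y' : Type*} [Category C'] [Category Y']
    (L₁ L₂ : C' ⥤ Y') {X X' : C'}
    (u : X ⟶ X') (g : X' ⟶ X) (h1 : u ≫ g = 𝟙 X) (h2 : g ≫ u = 𝟙 X')
    (e₁ : L₁.obj X = L₂.obj X) (e₂ : L₁.obj X' = L₂.obj X')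
    (hu : L₁.map u = eqToHom e₁ ≫ L₂.map u ≫ eqToHom e₂.symm) :
    L₁.map g = eqToHom e₂ ≫ L₂.map g ≫ eqToHom e₁.symm := by
  have k2 : L₁.map g ≫ L₁.map u = 𝟙 _ := by rw [← L₁.map_comp, h2, L₁.map_id]
  have k3 : L₂.map u ≫ L₂.map g = 𝟙 _ := by rw [← L₂.map_comp, h1, L₂.map_id]
  have hr : L₁.map u ≫ (eqToHom e₂ ≫ L₂.map g ≫ eqToHom e₁.symm) = 𝟙 _ := by
    rw [hu]
    simp only [Category.assoc, eqToHom_trans_assoc, eqToHom_refl, Category.id_comp]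
    rw [reassoc_of% k3]
    simp
  calc L₁.map g = L₁.map g ≫ (L₁.map u ≫ (eqToHom e₂ ≫ L₂.map g ≫ eqToHom e₁.symm)) := by
        rw [hr]; simp
    _ = (L₁.map g ≫ L₁.map u) ≫ (eqToHom e₂ ≫ L₂.map g ≫ eqToHom e₁.symm) := by simp
    _ = _ := by rw [k2]; simp

end ZCok

open ZCok in
/-- Every functor `F : A ⥤ B` between small categories admits a `Z`-cokernel with
respect to the ideal of trivial functors: there is a functor `U : B ⥤ C` with `U ∘ F`
trivial such that every functor `W` out of `B` with `W ∘ F` trivial factors uniquely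
through `U`. -/
theorem exists_zCokernel {A B : Type u} [Category.{u} A] [Category.{u} B]
    (F : A ⥤ B) :
    ∃ (C : Cat.{u, u}) (U : B ⥤ C),
      IsTrivialFunctor (F ⋙ U) ∧
        ∀ (Y : Cat.{u, u}) (W : B ⥤ Y), IsTrivialFunctor (F ⋙ W) →
          ∃! L : (C : Type u) ⥤ Y, U ⋙ L = W := by
  refine ⟨Cat.of (ZCok.C F), U F, ?_, ?_⟩
  · intro a b f
    constructor
    · exact congrArg (fun p => (Quotient.functor (pathRel F)).obj ((Paths.of _).obj p))
        (Quot.sound ⟨a, b, f, rfl, rfl⟩)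
    · exact ⟨(Quotient.functor (pathRel F)).map ((Paths.of _).map (Edge.inv f)),
        U_hom_inv F f, U_inv_hom F f⟩
  · intro Y W hW
    refine ⟨liftC W hW, U_comp_liftC W hW, ?_⟩
    intro L hL
    have hLW : U F ⋙ L = U F ⋙ liftC W hW := hL.trans (U_comp_liftC W hW).symm
    apply CategoryTheory.Quotient.lift_unique'
    fapply Paths.ext_functor
    · funext p
      induction p using Quot.ind with
      | _ x => exact Functor.congr_obj hLW x
    · rintro p q (e : Edge F p q)
      cases e with
      | @of x y f => exact Functor.congr_hom hLW f
      | @inv a b f =>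
        exact invDet L (liftC W hW) ((U F).map (F.map f))
          ((Quotient.functor (pathRel F)).map ((Paths.of _).map (Edge.inv f)))
          (U_hom_inv F f) (U_inv_hom F f)
          (Functor.congr_obj hLW (F.obj a)) (Functor.congr_obj hLW (F.obj b))
          (Functor.congr_hom hLW (F.map f))
end

section
/- Let A be a small category and let s : A ⥤ S be a Z-cokernel of the identity functor of A with respect to the ideal of trivial functors (i.e., s is trivial and every trivial functor out of A factors uniquely through s). Let F : A ⥤ B be any functor between small categories, and form the pushout in Cat of s along F, with resulting functors U : B ⥤ C and V : S ⥤ C satisfying U ∘ F = V ∘ s. Then U is a Z-cokernel of F: U ∘ F is trivial, and every functor W : B ⥤ Y with W ∘ F trivial factors uniquely through U. -/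
open CategoryTheory Limits

universe u

/-- Let `s : A ⥤ S` be a `Z`-cokernel of the identity functor of `A` with respect to
the ideal of trivial functors, let `F : A ⥤ B` be any functor, and form the pushout in
`Cat` of `s` along `F`, with legs `U = c.inl : B ⥤ C` and `V = c.inr : S ⥤ C`
(satisfying `U ∘ F = V ∘ s`).  Then `U` is a `Z`-cokernel of `F`: `U ∘ F` is trivial,
and every functor `W` out of `B` with `W ∘ F` trivial factors uniquely through `U`. -/
theorem pushout_of_zCokernel_id_is_zCokernel
    (A B S : Cat.{u, u}) (s : A ⟶ S)
    (hs : IsTrivialFunctor (s.toFunctor : (A : Type u) ⥤ (S : Type u)))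
    (huniv : ∀ (X : Cat.{u, u}) (G : A ⟶ X),
      IsTrivialFunctor (G.toFunctor : (A : Type u) ⥤ (X : Type u)) → ∃! L : S ⟶ X, s ≫ L = G)
    (F : A ⟶ B) (c : PushoutCocone F s) (hc : IsColimit c) :
    IsTrivialFunctor ((F ≫ c.inl : A ⟶ c.pt).toFunctor : (A : Type u) ⥤ (c.pt : Type u)) ∧
      ∀ (Y : Cat.{u, u}) (W : B ⟶ Y),
        IsTrivialFunctor ((F ≫ W : A ⟶ Y).toFunctor : (A : Type u) ⥤ (Y : Type u)) →
          ∃! L : c.pt ⟶ Y, c.inl ≫ L = W := by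
  have htriv : ∀ {X Y Z : Cat.{u, u}} (G : X ⟶ Y) (H : Y ⟶ Z),
      IsTrivialFunctor (G.toFunctor : (X : Type u) ⥤ (Y : Type u)) →
      IsTrivialFunctor ((G ≫ H : X ⟶ Z).toFunctor : (X : Type u) ⥤ (Z : Type u)) := by
    intro X Y Z G H hG a b f
    obtain ⟨h1, h2⟩ := hG a b f
    exact ⟨congrArg H.toFunctor.obj h1, inferInstanceAs (IsIso (H.toFunctor.map (G.toFunctor.map f)))⟩
  have hcond : F ≫ c.inl = s ≫ c.inr := c.condition
  constructor
  · rw [hcond]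
    exact htriv s c.inr hs
  · intro Y W hW
    obtain ⟨L', hL', hL'uniq⟩ := huniv Y (F ≫ W) hW
    have hLW : s ≫ L' = F ≫ W := hL'
    refine ⟨hc.desc (PushoutCocone.mk W L' hLW.symm), ?_, ?_⟩
    · exact hc.fac _ WalkingSpan.left
    · intro L₁ h₁
      have h₂ : c.inr ≫ L₁ = L' := by
        apply hL'uniq
        rw [← Category.assoc, ← hcond, Category.assoc, h₁]
      apply PushoutCocone.IsColimit.hom_ext hc
      · rw [h₁]
        exact (hc.fac (PushoutCocone.mk W L' hLW.symm) WalkingSpan.left).symm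
      · rw [h₂]
        exact (hc.fac (PushoutCocone.mk W L' hLW.symm) WalkingSpan.right).symm
end

section
/- Let A be a small category and let Aut(A) denote the wide subcategory of A whose objects are all objects of A and whose morphisms are the automorphisms of A (morphisms f : X ⟶ X that are isomorphisms), with inclusion functor j : Aut(A) ⥤ A. Then Aut(A) is a skeletal groupoid, and for every small skeletal groupoid S and every functor G : S ⥤ A there exists a unique functor G' : S ⥤ Aut(A) with j ∘ G' = G. Consequently, the full subcategory of skeletal groupoids is coreflective in Cat, with coreflection A ↦ Aut(A). -/
open CategoryTheory

universe u

/-- The wide subcategory `Aut(A)` of `A` whose morphisms are the automorphisms of `A`: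
morphisms `f : X ⟶ Y` such that `X = Y` and `f` is an isomorphism. -/
def AutCat (A : Type u) [Category.{u} A] : Type u := A

instance AutCat.category (A : Type u) [Category.{u} A] : Category.{u} (AutCat A) where
  Hom X Y := {f : (show A from X) ⟶ (show A from Y) // X = Y ∧ IsIso f}
  id X := ⟨𝟙 _, rfl, inferInstance⟩
  comp f g := ⟨f.1 ≫ g.1, f.2.1.trans g.2.1, by
    have := f.2.2
    have := g.2.2
    infer_instance⟩
  id_comp f := Subtype.ext (Category.id_comp f.1)
  comp_id f := Subtype.ext (Category.comp_id f.1)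
  assoc f g h := Subtype.ext (Category.assoc f.1 g.1 h.1)

/-- The inclusion functor `j : Aut(A) ⥤ A`. -/
def autCatIncl (A : Type u) [Category.{u} A] : AutCat A ⥤ A where
  obj X := X
  map f := f.1

section Aux

variable {A : Type u} [Category.{u} A] {B : Type u} [Category.{u} B]

theorem autCat_isIso (X Y : AutCat A) (f : X ⟶ Y) : IsIso f := by
  obtain ⟨g, hXY, hg⟩ := f
  subst hXY
  exact ⟨⟨⟨inv g, rfl, inferInstance⟩, Subtype.ext (IsIso.hom_inv_id g),
    Subtype.ext (IsIso.inv_hom_id g)⟩⟩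

theorem autCat_skeletal : Skeletal (AutCat A) := fun _ _ h => h.some.hom.2.1

/-- Lift of a functor from a skeletal groupoid to `AutCat A`. -/
def autLift {S : Type u} [Category.{u} S] (h1 : ∀ (X Y : S) (f : X ⟶ Y), IsIso f)
    (h2 : Skeletal S) (G : S ⥤ A) : S ⥤ AutCat A where
  obj X := G.obj X
  map {X Y} f := ⟨G.map f, by
    have := h1 X Y f
    exact congrArg G.obj (h2 ⟨asIso f⟩), by
    have := h1 X Y f
    infer_instance⟩
  map_id X := Subtype.ext (G.map_id X)
  map_comp f g := Subtype.ext (G.map_comp f g)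

theorem autLift_fac {S : Type u} [Category.{u} S] (h1 : ∀ (X Y : S) (f : X ⟶ Y), IsIso f)
    (h2 : Skeletal S) (G : S ⥤ A) : autLift h1 h2 G ⋙ autCatIncl A = G :=
  CategoryTheory.Functor.ext (fun _ => rfl) (fun _ _ _ => by simp [autLift, autCatIncl]; exact (Category.id_comp _).symm)

theorem autLift_uniq {S : Type u} [Category.{u} S] (h1 : ∀ (X Y : S) (f : X ⟶ Y), IsIso f)
    (h2 : Skeletal S) (G : S ⥤ A) (G' : S ⥤ AutCat A) (h : G' ⋙ autCatIncl A = G) :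
    G' = autLift h1 h2 G := by
  subst h
  refine CategoryTheory.Functor.ext (fun X => rfl) (fun X Y f => ?_)
  refine Subtype.ext ?_
  simp [autLift, autCatIncl, Functor.comp]

/-- Functoriality of `AutCat`. -/
def AutCat.map (F : A ⥤ B) : AutCat A ⥤ AutCat B where
  obj X := F.obj X
  map {X Y} f := ⟨F.map f.1, congrArg F.obj f.2.1, by have := f.2.2; exact Functor.map_isIso F f.1⟩
  map_id X := Subtype.ext (F.map_id X)
  map_comp f g := Subtype.ext (F.map_comp f.1 g.1)

end Aux

/-- The predicate "skeletal groupoid" on `Cat`. -/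
abbrev SkelGrpd : Cat.{u, u} → Prop := fun C =>
  (∀ (X Y : (C : Type u)) (f : X ⟶ Y), IsIso f) ∧ Skeletal (C : Type u)

/-- The coreflection functor `Cat ⥤` skeletal groupoids. -/
def autCatFunctor : Cat.{u, u} ⥤ ObjectProperty.FullSubcategory SkelGrpd.{u} where
  obj C := ⟨Cat.of (AutCat C), autCat_isIso (A := (C : Type u)), autCat_skeletal (A := (C : Type u))⟩
  map {C D} F := ObjectProperty.homMk
    (Cat.Hom.ofFunctor (@AutCat.map (C : Type u) C.str (D : Type u) D.str F.toFunctor))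
  map_id C := by
    apply ObjectProperty.hom_ext; apply Cat.Hom.ext
    rfl
  map_comp {C D E} F G := by
    apply ObjectProperty.hom_ext; apply Cat.Hom.ext
    rfl

/-- The coreflection adjunction. -/
noncomputable def autCatAdj :
    ObjectProperty.ι SkelGrpd.{u} ⊣ autCatFunctor.{u} :=
  Adjunction.mkOfUnitCounit
    { unit :=
      { app := fun S => ObjectProperty.homMk (Cat.Hom.ofFunctor
          (@autLift (S.obj : Type u) S.obj.str (S.obj : Type u) S.obj.str
            S.2.1 S.2.2 (𝟭 (S.obj : Type u))))
        naturality := fun S T G => by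
          apply ObjectProperty.hom_ext; apply Cat.Hom.ext
          rfl }
      counit :=
      { app := fun C => Cat.Hom.ofFunctor (autCatIncl C)
        naturality := fun C D F => by
          apply Cat.Hom.ext
          rfl }
      left_triangle := by
        ext S
        rfl
      right_triangle := by
        ext C
        rfl }

/-- `Aut(A)` is a skeletal groupoid, every functor from a small skeletal groupoid to
`A` factors uniquely through the inclusion `j : Aut(A) ⥤ A`, and consequently the full
subcategory of `Cat` consisting of the skeletal groupoids is coreflective in `Cat`. -/
theorem autCat_coreflection (A : Type u) [Category.{u} A] :
    (∀ (X Y : AutCat A) (f : X ⟶ Y), IsIso f) ∧ Skeletal (AutCat A) ∧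
      (∀ (S : Type u) [Category.{u} S],
        (∀ (X Y : S) (f : X ⟶ Y), IsIso f) → Skeletal S →
          ∀ G : S ⥤ A, ∃! G' : S ⥤ AutCat A, G' ⋙ autCatIncl A = G) ∧
      (ObjectProperty.ι
        (fun C : Cat.{u, u} =>
          (∀ (X Y : (C : Type u)) (f : X ⟶ Y), IsIso f) ∧
            Skeletal (C : Type u))).IsLeftAdjoint := by
  exact ⟨autCat_isIso, autCat_skeletal, fun S _ h1 h2 G =>
    ⟨autLift h1 h2 G, autLift_fac h1 h2 G, fun G' h => autLift_uniq h1 h2 G G' h⟩,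
    ⟨autCatFunctor, ⟨autCatAdj⟩⟩⟩
end
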